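/- Let n ∈ ℕ, m ∈ ℕ₀, M ∈ ℕ ∪ {∞} and 0 < s ≤ 1, and let (p_ε)_{ε>0} ⊆ C^{m,s}S^0_{0,0}(ℝⁿ×ℝⁿ; M) be a bounded family. Then there is a sequence ε_l → 0 and a function p: ℝⁿ×ℝⁿ → ℂ such that for all multi-indices α, β ∈ ℕ₀ⁿ with |β| ≤ m and |α| ≤ M − 1: (i) ∂_x^β ∂_ξ^α p exists and belongs to C^{0,s}(ℝⁿ×ℝⁿ); (ii) ∂_x^β ∂_ξ^α p_{ε_l} → ∂_x^β ∂_ξ^α p uniformly on every compact subset of ℝⁿ×ℝⁿ as l → ∞. In particular p ∈ C^{m,s}S^0_{0,0}(ℝⁿ×ℝⁿ; M−1). -/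

import Mathlib

open MeasureTheory Filter Topology Complex
open scoped RealInnerProductSpace ENNReal NNReal

set_option synthInstance.maxHeartbeats 1000000
noncomputable section

/-! ## Basic setup -/

abbrev En (n : ℕ) : Type := EuclideanSpace ℝ (Fin n)
abbrev Sch (n : ℕ) : Type := SchwartzMap (En n) ℂ

/-- `|α| = ∑ j α j` for a multi-index `α`. -/
def mdeg {n : ℕ} (α : Fin n → ℕ) : ℕ := ∑ j, α j

def esingle {n : ℕ} (j : Fin n) : En n := EuclideanSpace.single j (1 : ℝ)

/-- directional derivative `∂_v` (Gâteaux along `v`, via the Fréchet derivative). -/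
def pdVec {V : Type*} [NormedAddCommGroup V] [NormedSpace ℝ V] (v : V) (f : V → ℂ) : V → ℂ :=
  fun x => fderiv ℝ f x v

/-- iterated directional derivative `∂^α` with respect to the family of directions `bas`. -/
def pdMultiG {V : Type*} [NormedAddCommGroup V] [NormedSpace ℝ V] {N : ℕ}
    (bas : Fin N → V) (α : Fin N → ℕ) (f : V → ℂ) : V → ℂ :=
  (List.finRange N).foldr (fun j g => (pdVec (bas j))^[α j] g) f

/-- coordinate partial derivative `∂_{x_j}` on `ℝⁿ`. -/
def pdCoord {n : ℕ} (j : Fin n) (f : En n → ℂ) : En n → ℂ := pdVec (esingle j) f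

/-- iterated partial derivative `∂^α` on `ℝⁿ`. -/
def pdMulti {n : ℕ} (α : Fin n → ℕ) (f : En n → ℂ) : En n → ℂ :=
  pdMultiG (fun j : Fin n => esingle j) α f

/-- the Japanese bracket `⟨ξ⟩ = (1+|ξ|²)^{1/2}`. -/
def jb {n : ℕ} (ξ : En n) : ℝ := Real.sqrt (1 + ‖ξ‖ ^ 2)

/-- comparison `r ≤ N` of a real number with an extended natural number. -/
def leReal (r : ℝ) (N : ℕ∞) : Prop := ∀ k : ℕ, N = (k : ℕ∞) → r ≤ (k : ℝ)

/-! ## Symbol classes `C^{mt,s} S^m_{ρ,0}(ℝⁿ×ℝⁿ; M)` -/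

/-- `∂_ξ^α p(x,ξ)`. -/
def dXi {n : ℕ} (α : Fin n → ℕ) (p : En n → En n → ℂ) : En n → En n → ℂ :=
  fun x ξ => pdMulti α (p x) ξ

/-- `∂_x^β p(x,ξ)`. -/
def dX {n : ℕ} (β : Fin n → ℕ) (p : En n → En n → ℂ) : En n → En n → ℂ :=
  fun x ξ => pdMulti β (fun x' => p x' ξ) x

/-- `∂_x^β ∂_ξ^α p(x,ξ)`. -/
def mixD {n : ℕ} (α β : Fin n → ℕ) (p : En n → En n → ℂ) : En n → En n → ℂ :=
  dX β (dXi α p)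

/-- Membership in the symbol class `C^{mt,s} S^m_{ρ,0}(ℝⁿ×ℝⁿ; M)` with constants `C α`:
all derivatives `∂_x^β ∂_ξ^α p` with `|α| ≤ M`, `|β| ≤ mt` exist, are (jointly) continuous and
`‖∂_ξ^α p(·,ξ)‖_{C^{mt,s}} ≤ C α ⟨ξ⟩^{m-ρ|α|}`. -/
def SymWC (n mt : ℕ) (s m ρ : ℝ) (M : ℕ∞) (p : En n → En n → ℂ)
    (C : (Fin n → ℕ) → ℝ) : Prop :=
  (∀ α : Fin n → ℕ, ((mdeg α + 1 : ℕ) : ℕ∞) ≤ M → ∀ x : En n,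
      Differentiable ℝ (fun ξ => dXi α p x ξ)) ∧
  (∀ α β : Fin n → ℕ, ((mdeg α : ℕ) : ℕ∞) ≤ M → mdeg β + 1 ≤ mt → ∀ ξ : En n,
      Differentiable ℝ (fun x => mixD α β p x ξ)) ∧
  (∀ α β : Fin n → ℕ, ((mdeg α : ℕ) : ℕ∞) ≤ M → mdeg β ≤ mt →
      Continuous (fun z : En n × En n => mixD α β p z.1 z.2)) ∧
  (∀ α : Fin n → ℕ, ((mdeg α : ℕ) : ℕ∞) ≤ M →
    (∀ β : Fin n → ℕ, mdeg β ≤ mt → ∀ x ξ : En n,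
        ‖mixD α β p x ξ‖ ≤ C α * jb ξ ^ (m - ρ * mdeg α)) ∧
    (∀ β : Fin n → ℕ, mdeg β = mt → ∀ x y ξ : En n,
        ‖mixD α β p x ξ - mixD α β p y ξ‖ ≤ C α * jb ξ ^ (m - ρ * mdeg α) * ‖x - y‖ ^ s))

/-- The symbol class `C^{mt,s} S^m_{ρ,0}(ℝⁿ×ℝⁿ; M)`. -/
def SymClass (n mt : ℕ) (s m ρ : ℝ) (M : ℕ∞) (p : En n → En n → ℂ) : Prop :=
  ∃ C, SymWC n mt s m ρ M p C

/-! ## Fourier transform, pseudodifferential and Bessel potential operators -/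

/-- Fourier transform `û(ξ) = ∫ e^{-i x·ξ} u(x) dx`. -/
def fourierT (n : ℕ) (u : En n → ℂ) (ξ : En n) : ℂ :=
  ∫ x : En n, Complex.exp (-Complex.I * (⟪x, ξ⟫ : ℂ)) * u x

/-- The pseudodifferential operator `p(x,D_x)u(x) = ∫ e^{i x·ξ} p(x,ξ) û(ξ) đξ`. -/
def psiOpF (n : ℕ) (p : En n → En n → ℂ) (u : En n → ℂ) (x : En n) : ℂ :=
  ((2 * Real.pi) ^ n : ℝ)⁻¹ •
    ∫ ξ : En n, Complex.exp (Complex.I * (⟪x, ξ⟫ : ℂ)) * p x ξ * fourierT n u ξ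

/-- `⟨D_x⟩^s u (x) = ∫ e^{ix·ξ} ⟨ξ⟩^s û(ξ) đξ`. -/
def besselF (n : ℕ) (s : ℝ) (u : En n → ℂ) (x : En n) : ℂ :=
  ((2 * Real.pi) ^ n : ℝ)⁻¹ •
    ∫ ξ : En n, Complex.exp (Complex.I * (⟪x, ξ⟫ : ℂ)) * ((jb ξ ^ s : ℝ) : ℂ) * fourierT n u ξ

/-- The `H^s_q`-norm of a function, `‖⟨D⟩^s f‖_{L^q}`. -/
def HsNormS (n : ℕ) (s q : ℝ) (u : En n → ℂ) : ℝ≥0∞ :=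
  eLpNorm (besselF n s u) (ENNReal.ofReal q) volume

/-- `h` is a representative of `⟨D⟩^t g` lying in `L^q`; this expresses `g ∈ H^t_q` weakly. -/
def HsPair (n : ℕ) (t q : ℝ) (g h : En n → ℂ) : Prop :=
  MemLp h (ENNReal.ofReal q) volume ∧
  ∀ φ : Sch n, Integrable (fun x => g x * besselF n t (⇑φ) x) volume ∧
    ∫ x, g x * besselF n t (⇑φ) x = ∫ x, h x * φ x

/-! ## Multiplication by coordinates, `D_j`, commutators -/

/-- multiplication by the coordinate `x j`, as a continuous `ℝ`-linear map on Schwartz space. -/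
def MxR (n : ℕ) (j : Fin n) : Sch n →L[ℝ] Sch n :=
  SchwartzMap.bilinLeftCLM ((ContinuousLinearMap.lsmul ℝ ℝ : ℝ →L[ℝ] ℂ →L[ℝ] ℂ).flip)
    ((EuclideanSpace.proj j : En n →L[ℝ] ℝ).hasTemperateGrowth)

/-- multiplication by the coordinate `x j`, as a continuous `ℂ`-linear map on Schwartz space. -/
def MxC (n : ℕ) (j : Fin n) : Sch n →L[ℂ] Sch n :=
  { toFun := fun f => MxR n j f
    map_add' := fun f g => map_add _ f g
    map_smul' := by
      intro c f
      ext x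
      show (x j : ℝ) • ((c • f) x) = (c • (MxR n j f)) x
      show (x j : ℝ) • (c • f x) = c • ((x j : ℝ) • f x)
      rw [smul_comm]
    cont := (MxR n j).continuous }

/-- `D_j = -i ∂_j` on Schwartz functions, as a continuous `ℂ`-linear map. -/
def DjCLM (n : ℕ) (j : Fin n) : Sch n →L[ℂ] Sch n :=
  (-Complex.I : ℂ) • (SchwartzMap.evalCLM ℂ (En n) ℂ (esingle j) ∘L SchwartzMap.fderivCLM ℂ (En n) ℂ : Sch n →L[ℂ] Sch n)

/-- `ad(-i x_j) A` for an operator `A` on Schwartz functions. -/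
def adXOp (n : ℕ) (j : Fin n) (A : Sch n → En n → ℂ) : Sch n → En n → ℂ :=
  fun u x => -Complex.I * (x j : ℂ) * A u x + A (Complex.I • MxC n j u) x

/-- `ad(D_j) A` for an operator `A` on Schwartz functions. -/
def adDOp (n : ℕ) (j : Fin n) (A : Sch n → En n → ℂ) : Sch n → En n → ℂ :=
  fun u x => -Complex.I * fderiv ℝ (A u) x (esingle j) - A (DjCLM n j u) x

def adElem (n : ℕ) : Fin n ⊕ Fin n → (Sch n → En n → ℂ) → Sch n → En n → ℂ
  | Sum.inl j => adXOp n j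
  | Sum.inr j => adDOp n j

/-- iterated commutator along a list of elementary commutators. -/
def adListOp (n : ℕ) (L : List (Fin n ⊕ Fin n)) (A : Sch n → En n → ℂ) : Sch n → En n → ℂ :=
  L.foldr (adElem n) A

/-- number of factors `ad(-i x_j)` in the list. -/
def nXc {n : ℕ} (L : List (Fin n ⊕ Fin n)) : ℕ := L.countP Sum.isLeft
/-- number of factors `ad(D_j)` in the list. -/
def nDc {n : ℕ} (L : List (Fin n ⊕ Fin n)) : ℕ := L.countP Sum.isRight

/-- The set `𝓐^{m,M}_{ρ,0}(mt,q)`: `P` is linear, bounded from `H^m_q` to `L^q`, and all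
iterated commutators `ad(-ix)^α ad(D_x)^β P` with `|α| ≤ M`, `|β| ≤ mt` are bounded from
`H^{m-ρ|α|}_q` to `L^q`. -/
def memA (n : ℕ) (m : ℝ) (M mt : ℕ∞) (q ρ : ℝ) (P : Sch n → En n → ℂ) : Prop :=
  (∀ u v : Sch n, P (u + v) = fun x => P u x + P v x) ∧
  (∀ (c : ℂ) (u : Sch n), P (c • u) = fun x => c * P u x) ∧
  ∀ L : List (Fin n ⊕ Fin n),
    ((nXc L : ℕ) : ℕ∞) ≤ M → ((nDc L : ℕ) : ℕ∞) ≤ mt →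
    ∃ C : ℝ, ∀ u : Sch n,
      eLpNorm (adListOp n L P u) (ENNReal.ofReal q) volume ≤
        ENNReal.ofReal C * HsNormS n (m - ρ * (nXc L : ℕ)) q ⇑u

/-! ## Oscillatory integrals -/

/-- the regularized integral `(2π)^{-d} ∬ χ(εy,εη) e^{-i B(y,η)} a(y,η) dy dη`. -/
def oscP {V : Type*} [NormedAddCommGroup V] [NormedSpace ℝ V] [MeasureSpace V]
    (d : ℕ) (B : V → V → ℝ) (a : V → V → ℂ) (χ : SchwartzMap (V × V) ℂ) (ε : ℝ) : ℂ :=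
  ((2 * Real.pi) ^ d : ℝ)⁻¹ •
    ∫ z : V × V, χ (ε • z) * Complex.exp (-Complex.I * (B z.1 z.2 : ℂ)) * a z.1 z.2

/-- `I` is the oscillatory integral `Os-∬ e^{-iB(y,η)} a(y,η) dy đη`: for every Schwartz `χ`
with `χ(0)=1` the regularized integrals converge to `I` as `ε → 0⁺`. -/
def IsOsc {V : Type*} [NormedAddCommGroup V] [NormedSpace ℝ V] [MeasureSpace V]
    (d : ℕ) (B : V → V → ℝ) (a : V → V → ℂ) (I : ℂ) : Prop :=
  ∀ χ : SchwartzMap (V × V) ℂ, χ 0 = 1 →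
    Tendsto (fun ε : ℝ => oscP d B a χ ε) (𝓝[>] (0 : ℝ)) (𝓝 I)

/-- the standard pairing `y·η` on `ℝⁿ`. -/
def BE (n : ℕ) : En n → En n → ℝ := fun y η => ⟪y, η⟫

/-- the pairing `y·ξ + y'·ξ'` on `ℝⁿ × ℝⁿ`. -/
def B4 (n : ℕ) : En n × En n → En n × En n → ℝ := fun Y Ξ => ⟪Y.1, Ξ.1⟫ + ⟪Y.2, Ξ.2⟫

/-- the pairing on `ℝⁿ × ℝᵏ`. -/
def Bprod (n k : ℕ) : En n × En k → En n × En k → ℝ := fun Y H => ⟪Y.1, H.1⟫ + ⟪Y.2, H.2⟫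

/-! ## Amplitudes -/

/-- `∂_y^β a(y,η)` (generic version). -/
def dYampG {V : Type*} [NormedAddCommGroup V] [NormedSpace ℝ V] {Nd : ℕ} (bas : Fin Nd → V)
    (β : Fin Nd → ℕ) (a : V → V → ℂ) : V → V → ℂ :=
  fun y η => pdMultiG bas β (fun y' => a y' η) y

/-- `∂_η^α ∂_y^β a(y,η)` (generic version). -/
def mixAmpG {V : Type*} [NormedAddCommGroup V] [NormedSpace ℝ V] {Nd : ℕ} (bas : Fin Nd → V)
    (α β : Fin Nd → ℕ) (a : V → V → ℂ) : V → V → ℂ :=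
  fun y η => pdMultiG bas α (fun η' => dYampG bas β a y η') η

/-- The amplitude class `𝓐^{m,N}_τ` with constants `C α β`. -/
def AmpWCG {V : Type*} [NormedAddCommGroup V] [NormedSpace ℝ V] {Nd : ℕ} (bas : Fin Nd → V)
    (m τ : ℝ) (N : ℕ∞) (a : V → V → ℂ) (C : (Fin Nd → ℕ) → (Fin Nd → ℕ) → ℝ) : Prop :=
  (∀ (β : Fin Nd → ℕ) (η : V), Differentiable ℝ (fun y => dYampG bas β a y η)) ∧
  (∀ α β : Fin Nd → ℕ, ((mdeg α + 1 : ℕ) : ℕ∞) ≤ N → ∀ y : V,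
      Differentiable ℝ (fun η => mixAmpG bas α β a y η)) ∧
  (∀ α β : Fin Nd → ℕ, ((mdeg α : ℕ) : ℕ∞) ≤ N →
      Continuous (fun z : V × V => mixAmpG bas α β a z.1 z.2)) ∧
  (∀ α β : Fin Nd → ℕ, ((mdeg α : ℕ) : ℕ∞) ≤ N → ∀ y η : V,
      ‖mixAmpG bas α β a y η‖ ≤ C α β * (1 + ‖η‖) ^ m * (1 + ‖y‖) ^ τ)

/-- The amplitude class `𝓐^{m,N}_τ` (generic version). -/
def AmpG {V : Type*} [NormedAddCommGroup V] [NormedSpace ℝ V] {Nd : ℕ} (bas : Fin Nd → V)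
    (m τ : ℝ) (N : ℕ∞) (a : V → V → ℂ) : Prop :=
  ∃ C, AmpWCG bas m τ N a C

/-- `∂_η^α ∂_y^β a(y,η)` on `ℝⁿ`. -/
def mixAmp {n : ℕ} (α β : Fin n → ℕ) (a : En n → En n → ℂ) : En n → En n → ℂ :=
  mixAmpG (fun j : Fin n => esingle j) α β a

/-- The amplitude class `𝓐^{m,N}_τ(ℝⁿ×ℝⁿ)` with constants `C α β`. -/
def AmpWC (n : ℕ) (m τ : ℝ) (N : ℕ∞) (a : En n → En n → ℂ)
    (C : (Fin n → ℕ) → (Fin n → ℕ) → ℝ) : Prop :=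
  AmpWCG (fun j : Fin n => esingle j) m τ N a C

/-- The amplitude class `𝓐^{m,N}_τ(ℝⁿ×ℝⁿ)`. -/
def Amp (n : ℕ) (m τ : ℝ) (N : ℕ∞) (a : En n → En n → ℂ) : Prop := ∃ C, AmpWC n m τ N a C

/-! ## The operators `A^l(D_y, η)` -/

/-- `D_j = -i∂_j` on functions. -/
def DyC {n : ℕ} (j : Fin n) (f : En n → ℂ) : En n → ℂ := fun y => -Complex.I * pdCoord j f y

/-- `(1 - Δ) f`. -/
def oneSubLap {n : ℕ} (f : En n → ℂ) : En n → ℂ :=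
  fun y => f y - ∑ j : Fin n, pdCoord j (pdCoord j f) y

/-- `⟨D_y⟩^{2k} = (1-Δ)^k`. -/
def besselD {n : ℕ} (k : ℕ) (f : En n → ℂ) : En n → ℂ := oneSubLap^[k] f

/-- `A^l(D_y,η)`, acting on functions `a(y,η)` by differentiating in `y` with weights in `η`. -/
def AopY (n : ℕ) (l : ℕ) (a : En n → En n → ℂ) : En n → En n → ℂ :=
  if l = 0 then a
  else if l % 2 = 0 then
    fun y η => ((jb η ^ (-(l : ℝ)) : ℝ) : ℂ) * besselD (l / 2) (fun y' => a y' η) y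
  else
    fun y η =>
      ((jb η ^ (-(l : ℝ) - 1) : ℝ) : ℂ) * besselD ((l - 1) / 2) (fun y' => a y' η) y -
      ∑ j : Fin n, ((jb η ^ (-(l : ℝ)) : ℝ) : ℂ) * ((η j / jb η : ℝ) : ℂ) *
        besselD ((l - 1) / 2) (DyC j (fun y' => a y' η)) y

/-- `A^l(D_η,y)`, acting on functions `a(y,η)` by differentiating in `η` with weights in `y`. -/
def AopEta (n : ℕ) (l : ℕ) (a : En n → En n → ℂ) : En n → En n → ℂ :=
  fun y η => AopY n l (Function.swap a) η y

/-! ## Triple and double (quadruple-variable) symbols -/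

/-- `∂_{x'}^{β'} a(x,ξ,x')`. -/
def d3X' {n : ℕ} (β' : Fin n → ℕ) (a : En n → En n → En n → ℂ) : En n → En n → En n → ℂ :=
  fun x ξ x' => pdMulti β' (fun t => a x ξ t) x'

/-- `∂_ξ^α a(x,ξ,x')`. -/
def d3Xi {n : ℕ} (α : Fin n → ℕ) (a : En n → En n → En n → ℂ) : En n → En n → En n → ℂ :=
  fun x ξ x' => pdMulti α (fun t => a x t x') ξ

/-- `∂_x^β ∂_ξ^α ∂_{x'}^{β'} a(x,ξ,x')`. -/
def d3mix {n : ℕ} (α β β' : Fin n → ℕ) (a : En n → En n → En n → ℂ) :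
    En n → En n → En n → ℂ :=
  fun x ξ x' => pdMulti β (fun t => d3Xi α (d3X' β' a) t ξ x') x

/-- The symbol class `C^{mt,s} S^m_{0,0}(ℝⁿ×ℝⁿ×ℝⁿ; N)` with constants `C α β'`. -/
def TripWC (n mt : ℕ) (s m : ℝ) (N : ℕ∞) (a : En n → En n → En n → ℂ)
    (C : (Fin n → ℕ) → (Fin n → ℕ) → ℝ) : Prop :=
  (∀ (β' : Fin n → ℕ) (x ξ : En n), Differentiable ℝ (fun x' => d3X' β' a x ξ x')) ∧
  (∀ α β' : Fin n → ℕ, ((mdeg α + 1 : ℕ) : ℕ∞) ≤ N → ∀ x x' : En n,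
      Differentiable ℝ (fun ξ => d3Xi α (d3X' β' a) x ξ x')) ∧
  (∀ α β β' : Fin n → ℕ, ((mdeg α : ℕ) : ℕ∞) ≤ N → mdeg β + 1 ≤ mt → ∀ ξ x' : En n,
      Differentiable ℝ (fun x => d3mix α β β' a x ξ x')) ∧
  (∀ α β β' : Fin n → ℕ, ((mdeg α : ℕ) : ℕ∞) ≤ N → mdeg β ≤ mt →
      Continuous (fun z : En n × En n × En n => d3mix α β β' a z.1 z.2.1 z.2.2)) ∧
  (∀ α β' : Fin n → ℕ, ((mdeg α : ℕ) : ℕ∞) ≤ N →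
    (∀ β : Fin n → ℕ, mdeg β ≤ mt → ∀ x ξ x' : En n,
        ‖d3mix α β β' a x ξ x'‖ ≤ C α β' * jb ξ ^ m) ∧
    (∀ β : Fin n → ℕ, mdeg β = mt → ∀ x y ξ x' : En n,
        ‖d3mix α β β' a x ξ x' - d3mix α β β' a y ξ x'‖ ≤ C α β' * jb ξ ^ m * ‖x - y‖ ^ s))

/-- The symbol class `C^{mt,s} S^m_{0,0}(ℝⁿ×ℝⁿ×ℝⁿ; N)`. -/
def TripClass (n mt : ℕ) (s m : ℝ) (N : ℕ∞) (a : En n → En n → En n → ℂ) : Prop :=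
  ∃ C, TripWC n mt s m N a C

/-- `v` is the value of `a(x,D_x,x')u(x)`, defined by the fourfold oscillatory integral
`Os-⨌ e^{-i(y·ξ+y'·ξ')} a(x,ξ,x+y)u(x+y+y') dy dy' đξ đξ'`. -/
def OpVal3 (n : ℕ) (a : En n → En n → En n → ℂ) (u : En n → ℂ) (x : En n) (v : ℂ) : Prop :=
  IsOsc (2 * n) (B4 n) (fun Y Ξ => a x Ξ.1 (x + Y.1) * u (x + Y.1 + Y.2)) v

/-- `∂_x^β ∂_ξ^α ∂_{x'}^{β'} ∂_{ξ'}^{α'} p(x,ξ,x',ξ')`. -/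
def d4mix {n : ℕ} (α β α' β' : Fin n → ℕ) (p : En n → En n → En n → En n → ℂ) :
    En n → En n → En n → En n → ℂ :=
  fun x ξ x' ξ' =>
    pdMulti β (fun t =>
      pdMulti α (fun u' =>
        pdMulti β' (fun r =>
          pdMulti α' (fun w => p t u' r w) ξ') x') ξ) x

/-- partial versions used for stating differentiability of the stages. -/
def d4a {n : ℕ} (α' : Fin n → ℕ) (p : En n → En n → En n → En n → ℂ) :
    En n → En n → En n → En n → ℂ :=
  fun x ξ x' ξ' => pdMulti α' (fun w => p x ξ x' w) ξ'

def d4b {n : ℕ} (α' β' : Fin n → ℕ) (p : En n → En n → En n → En n → ℂ) :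
    En n → En n → En n → En n → ℂ :=
  fun x ξ x' ξ' => pdMulti β' (fun r => d4a α' p x ξ r ξ') x'

def d4c {n : ℕ} (α α' β' : Fin n → ℕ) (p : En n → En n → En n → En n → ℂ) :
    En n → En n → En n → En n → ℂ :=
  fun x ξ x' ξ' => pdMulti α (fun u' => d4b α' β' p x u' x' ξ') ξ

/-- The double symbol class `C^{mt,s} S^{m,m'}_{0,0}(ℝⁿ×ℝⁿ×ℝⁿ×ℝⁿ; N)` with constants. -/
def QuadWC (n mt : ℕ) (s m m' : ℝ) (N : ℕ∞) (p : En n → En n → En n → En n → ℂ)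
    (C : (Fin n → ℕ) → (Fin n → ℕ) → (Fin n → ℕ) → ℝ) : Prop :=
  (∀ (α' : Fin n → ℕ) (x ξ x' : En n), Differentiable ℝ (fun ξ' => d4a α' p x ξ x' ξ')) ∧
  (∀ (α' β' : Fin n → ℕ) (x ξ ξ' : En n), Differentiable ℝ (fun x' => d4b α' β' p x ξ x' ξ')) ∧
  (∀ α α' β' : Fin n → ℕ, ((mdeg α + 1 : ℕ) : ℕ∞) ≤ N → ∀ x x' ξ' : En n,
      Differentiable ℝ (fun ξ => d4c α α' β' p x ξ x' ξ')) ∧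
  (∀ α β α' β' : Fin n → ℕ, ((mdeg α : ℕ) : ℕ∞) ≤ N → mdeg β + 1 ≤ mt → ∀ ξ x' ξ' : En n,
      Differentiable ℝ (fun x => d4mix α β α' β' p x ξ x' ξ')) ∧
  (∀ α β α' β' : Fin n → ℕ, ((mdeg α : ℕ) : ℕ∞) ≤ N → mdeg β ≤ mt →
      Continuous (fun z : (En n × En n) × En n × En n =>
        d4mix α β α' β' p z.1.1 z.1.2 z.2.1 z.2.2)) ∧
  (∀ α α' β' : Fin n → ℕ, ((mdeg α : ℕ) : ℕ∞) ≤ N →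
    (∀ β : Fin n → ℕ, mdeg β ≤ mt → ∀ x ξ x' ξ' : En n,
        ‖d4mix α β α' β' p x ξ x' ξ'‖ ≤ C α β' α' * jb ξ ^ m * jb ξ' ^ m') ∧
    (∀ β : Fin n → ℕ, mdeg β = mt → ∀ x y ξ x' ξ' : En n,
        ‖d4mix α β α' β' p x ξ x' ξ' - d4mix α β α' β' p y ξ x' ξ'‖ ≤
          C α β' α' * jb ξ ^ m * jb ξ' ^ m' * ‖x - y‖ ^ s))

/-- `v` is the value of `p(x,D_x,x',D_{x'})u(x)`, defined by the fourfold oscillatory integral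
`Os-⨌ e^{-i(y·ξ+y'·ξ')} p(x,ξ,x+y,ξ')u(x+y+y') dy dy' đξ đξ'`. -/
def OpVal4 (n : ℕ) (p : En n → En n → En n → En n → ℂ) (u : En n → ℂ) (x : En n) (v : ℂ) :
    Prop :=
  IsOsc (2 * n) (B4 n) (fun Y Ξ => p x Ξ.1 (x + Y.1) Ξ.2 * u (x + Y.1 + Y.2)) v

/-! ## Tempered distributions -/

/-- The space of (complex) tempered distributions `𝓢'(ℝⁿ)`. -/
abbrev TDist (n : ℕ) := Sch n →L[ℂ] ℂ

/-- multiplication of a tempered distribution by `x_j`. -/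
def distMx (n : ℕ) (j : Fin n) (u : TDist n) : TDist n := u.comp (MxC n j)

/-- `D_j` of a tempered distribution: `⟨D_j u, φ⟩ = -⟨u, D_j φ⟩`. -/
def distDj (n : ℕ) (j : Fin n) (u : TDist n) : TDist n := -(u.comp (DjCLM n j))

/-- `ad(-i x_j) A` for an operator `A` on tempered distributions. -/
def adX' (n : ℕ) (j : Fin n) (A : TDist n → En n → ℂ) : TDist n → En n → ℂ :=
  fun u x => -Complex.I * (x j : ℂ) * A u x + A (Complex.I • distMx n j u) x

/-- `ad(D_j) A` for an operator `A` on tempered distributions. -/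
def adD' (n : ℕ) (j : Fin n) (A : TDist n → En n → ℂ) : TDist n → En n → ℂ :=
  fun u x => -Complex.I * fderiv ℝ (A u) x (esingle j) - A (distDj n j u) x

/-- `ad(-ix)^α A`. -/
def adXmulti (n : ℕ) (α : Fin n → ℕ) (A : TDist n → En n → ℂ) : TDist n → En n → ℂ :=
  (List.finRange n).foldr (fun j B => (adX' n j)^[α j] B) A

/-- `ad(D_x)^β A`. -/
def adDmulti (n : ℕ) (β : Fin n → ℕ) (A : TDist n → En n → ℂ) : TDist n → En n → ℂ :=
  (List.finRange n).foldr (fun j B => (adD' n j)^[β j] B) A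

/-- the iterated commutator `ad(-ix)^α ad(D_x)^β A`. -/
def adIter (n : ℕ) (α β : Fin n → ℕ) (A : TDist n → En n → ℂ) : TDist n → En n → ℂ :=
  adXmulti n α (adDmulti n β A)

/-- `∂^β` on Schwartz functions (as Schwartz functions). -/
def sPDmulti (n : ℕ) (β : Fin n → ℕ) (f : Sch n) : Sch n :=
  (List.finRange n).foldr (fun j g => (fun h : Sch n => (SchwartzMap.evalCLM ℂ (En n) ℂ (esingle j) ∘L SchwartzMap.fderivCLM ℂ (En n) ℂ : Sch n →L[ℂ] Sch n) h)^[β j] g) f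

/-- `D^β = (-i)^{|β|} ∂^β` on Schwartz functions. -/
def sDm (n : ℕ) (β : Fin n → ℕ) (f : Sch n) : Sch n :=
  ((-Complex.I) ^ (mdeg β)) • sPDmulti n β f


/-- the canonical "basis" directions of `ℝⁿ × ℝᵏ`. -/
def pbas (n k : ℕ) : Fin (n + k) → En n × En k :=
  Fin.addCases (fun j => (esingle j, 0)) (fun j => (0, esingle j))

end

noncomputable section
section Struct
variable {n : ℕ} {A : Type*}

lemma foldrD_congr (T : Fin n → (A → A)) {γ γ' : Fin n → ℕ} (f : A)
    (L : List (Fin n)) (h : ∀ i ∈ L, γ i = γ' i) :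
    L.foldr (fun j g => (T j)^[γ j] g) f = L.foldr (fun j g => (T j)^[γ' j] g) f := by
  induction L with
  | nil => rfl
  | cons a L ih =>
    simp only [List.foldr_cons]
    rw [h a (by simp), ih (fun i hi => h i (by simp [hi]))]

lemma foldrD_zero (T : Fin n → (A → A)) {γ : Fin n → ℕ} (f : A)
    (L : List (Fin n)) (h : ∀ i ∈ L, γ i = 0) :
    L.foldr (fun j g => (T j)^[γ j] g) f = f := by
  induction L with
  | nil => rfl
  | cons a L ih =>
    simp only [List.foldr_cons]
    rw [h a (by simp), ih (fun i hi => h i (by simp [hi]))]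
    rfl

lemma foldrD_single (T : Fin n → (A → A)) {γ : Fin n → ℕ} (f : A) {j : Fin n}
    (L : List (Fin n)) (hs : L.Pairwise (· < ·)) (hj : j ∈ L)
    (h : ∀ i ∈ L, i < j → γ i = 0) :
    L.foldr (fun i g => (T i)^[(γ + Pi.single j 1 : Fin n → ℕ) i] g) f
      = T j (L.foldr (fun i g => (T i)^[γ i] g) f) := by
  induction L with
  | nil => cases hj
  | cons a L ih =>
    have hsort := List.pairwise_cons.mp hs
    by_cases hja : j = a
    · subst hja
      have hnot : ∀ i ∈ L, (γ + Pi.single j 1 : Fin n → ℕ) i = γ i := by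
        intro i hi
        have hne : j ≠ i := ne_of_lt (hsort.1 i hi)
        simp [Pi.single_eq_of_ne (Ne.symm hne)]
      simp only [List.foldr_cons]
      rw [foldrD_congr T f L hnot]
      have hx : (γ + Pi.single j 1 : Fin n → ℕ) j = γ j + 1 := by simp
      rw [hx, Function.iterate_succ_apply']
    · have hj' : j ∈ L := by
        rcases List.mem_cons.mp hj with h1 | h1
        · exact absurd h1 hja
        · exact h1
      have haj : a < j := hsort.1 j hj'
      have hγa : γ a = 0 := h a (by simp) haj
      have h2 : (γ + Pi.single j 1 : Fin n → ℕ) a = 0 := by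
        simp [hγa, Pi.single_eq_of_ne (ne_of_lt haj)]
      simp only [List.foldr_cons, h2, hγa, Function.iterate_zero, id_eq]
      exact ih hsort.2 hj' (fun i hi hlt => h i (by simp [hi]) hlt)

lemma pdMulti_zero (f : En n → ℂ) : pdMulti 0 f = f :=
  foldrD_zero _ f _ (fun i _ => rfl)

lemma pdMulti_succ {γ : Fin n → ℕ} (f : En n → ℂ) {j : Fin n}
    (h : ∀ i, i < j → γ i = 0) :
    pdMulti (γ + Pi.single j 1) f = pdVec (esingle j) (pdMulti γ f) :=
  foldrD_single _ f _ (List.pairwise_lt_finRange n) (List.mem_finRange j)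
    (fun i _ hi => h i hi)

lemma mdeg_add (γ γ' : Fin n → ℕ) : mdeg (γ + γ') = mdeg γ + mdeg γ' := by
  simpa [mdeg] using Finset.sum_add_distrib

lemma mdeg_single (j : Fin n) : mdeg (Pi.single j (1:ℕ)) = 1 := by
  simp [mdeg]

lemma mdeg_eq_zero {γ : Fin n → ℕ} (h : mdeg γ = 0) : γ = 0 := by
  funext i
  exact Finset.sum_eq_zero_iff.mp h i (Finset.mem_univ i)

lemma exists_canon {γ : Fin n → ℕ} (h : γ ≠ 0) :
    ∃ (γ' : Fin n → ℕ) (j : Fin n),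
      γ = γ' + Pi.single j 1 ∧ (∀ i, i < j → γ' i = 0) ∧ mdeg γ = mdeg γ' + 1 := by
  have hne : (Finset.univ.filter fun i => γ i ≠ 0).Nonempty := by
    by_contra hc
    apply h
    funext i
    by_contra hγi
    exact hc ⟨i, Finset.mem_filter.mpr ⟨Finset.mem_univ i, hγi⟩⟩
  set j := (Finset.univ.filter fun i => γ i ≠ 0).min' hne with hjdef
  have hjmem : γ j ≠ 0 := (Finset.mem_filter.mp ((Finset.univ.filter fun i => γ i ≠ 0).min'_mem hne)).2
  have hmin : ∀ i, i < j → γ i = 0 := by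
    intro i hij
    by_contra hγi
    exact absurd hij (not_lt.mpr (Finset.min'_le _ i (Finset.mem_filter.mpr ⟨Finset.mem_univ i, hγi⟩)))
  refine ⟨Function.update γ j (γ j - 1), j, ?_, ?_, ?_⟩
  · funext i
    by_cases hij : i = j
    · subst hij; simp; omega
    · simp [Function.update_of_ne hij, Pi.single_eq_of_ne hij]
  · intro i hij
    rw [Function.update_of_ne (ne_of_lt hij)]
    exact hmin i hij
  · have : γ = Function.update γ j (γ j - 1) + Pi.single j 1 := by
      funext i
      by_cases hij : i = j
      · subst hij; simp; omega
      · simp [Function.update_of_ne hij, Pi.single_eq_of_ne hij]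
    conv_lhs => rw [this]
    rw [mdeg_add, mdeg_single]

end Struct
section CLMrep
variable {n : ℕ}

lemma euclid_sum_single (v : En n) : ∑ j, v j • esingle j = v := by
  have h := (EuclideanSpace.basisFun (Fin n) ℝ).sum_repr v
  simp only [EuclideanSpace.basisFun_apply, EuclideanSpace.basisFun_repr] at h
  exact h

lemma clm_rep (L : En n →L[ℝ] ℂ) :
    L = ∑ j, (EuclideanSpace.proj j : En n →L[ℝ] ℝ).smulRight (L (esingle j)) := by
  refine ContinuousLinearMap.ext fun v => ?_
  rw [ContinuousLinearMap.sum_apply]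
  have h1 : ∀ j, ((EuclideanSpace.proj j : En n →L[ℝ] ℝ).smulRight (L (esingle j))) v
      = L (v j • esingle j) := by
    intro j
    rw [ContinuousLinearMap.smulRight_apply, L.map_smul]
    rfl
  simp_rw [h1, ← map_sum, euclid_sum_single]

lemma abs_coord_le (v : En n) (j : Fin n) : |v j| ≤ ‖v‖ := by
  have h : ⟪esingle j, v⟫ = v j := by
    simp [esingle, EuclideanSpace.inner_single_left]
  calc |v j| = |⟪esingle j, v⟫| := by rw [h]
    _ ≤ ‖esingle j‖ * ‖v‖ := abs_real_inner_le_norm _ _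
    _ ≤ 1 * ‖v‖ := by
        apply mul_le_mul_of_nonneg_right _ (norm_nonneg v)
        simp [esingle, EuclideanSpace.norm_single]
    _ = ‖v‖ := one_mul _

lemma norm_proj_le_one (j : Fin n) : ‖(EuclideanSpace.proj j : En n →L[ℝ] ℝ)‖ ≤ 1 :=
  ContinuousLinearMap.opNorm_le_bound _ zero_le_one fun v => by
    rw [one_mul]
    simpa using abs_coord_le v j

lemma clm_norm_le (L : En n →L[ℝ] ℂ) {c : ℝ} (h : ∀ j, ‖L (esingle j)‖ ≤ c) :
    ‖L‖ ≤ n * c := by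
  conv_lhs => rw [clm_rep L]
  calc ‖∑ j, (EuclideanSpace.proj j : En n →L[ℝ] ℝ).smulRight (L (esingle j))‖
      ≤ ∑ j : Fin n, ‖(EuclideanSpace.proj j : En n →L[ℝ] ℝ).smulRight (L (esingle j))‖ :=
        norm_sum_le _ _
    _ ≤ ∑ _j : Fin n, c := by
        refine Finset.sum_le_sum fun j _ => ?_
        rw [ContinuousLinearMap.norm_smulRight_apply]
        calc ‖(EuclideanSpace.proj j : En n →L[ℝ] ℝ)‖ * ‖L (esingle j)‖
            ≤ 1 * c := mul_le_mul (norm_proj_le_one j) (h j) (norm_nonneg _) zero_le_one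
          _ = c := one_mul c
    _ = n * c := by
        rw [Finset.sum_const, Finset.card_univ, Fintype.card_fin, nsmul_eq_mul]

end CLMrep

section Comm
variable {n : ℕ}

lemma comm_pd {K : ℕ} {f : En n → ℂ}
    (hf : ∀ δ : Fin n → ℕ, mdeg δ ≤ K → Differentiable ℝ (pdMulti δ f)) :
    ∀ γ : Fin n → ℕ, mdeg γ ≤ K → ∀ i,
      pdVec (esingle i) (pdMulti γ f) = pdMulti (γ + Pi.single i 1) f := by
  suffices H : ∀ (d : ℕ) (γ : Fin n → ℕ), mdeg γ ≤ d → mdeg γ ≤ K → ∀ i,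
      pdVec (esingle i) (pdMulti γ f) = pdMulti (γ + Pi.single i 1) f by
    intro γ hγ i; exact H (mdeg γ) γ le_rfl hγ i
  intro d
  induction d with
  | zero =>
    intro γ hγ _ i
    have h0 : γ = 0 := mdeg_eq_zero (Nat.le_zero.mp hγ)
    subst h0
    rw [zero_add]
    have := pdMulti_succ (γ := (0 : Fin n → ℕ)) f (j := i) (fun _ _ => rfl)
    rw [zero_add] at this
    exact this.symm
  | succ d ih =>
    intro γ hγd hγK i
    by_cases h0 : γ = 0
    · subst h0
      rw [zero_add]
      have := pdMulti_succ (γ := (0 : Fin n → ℕ)) f (j := i) (fun _ _ => rfl)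
      rw [zero_add] at this
      exact this.symm
    obtain ⟨γ', j0, hdecomp, hmin, hmdeg⟩ := exists_canon h0
    by_cases hij : i ≤ j0
    · -- canonical case
      have hzero : ∀ i', i' < i → γ i' = 0 := by
        intro i' hi'
        have hi'j0 : i' < j0 := lt_of_lt_of_le hi' hij
        rw [hdecomp]
        have h1 : γ' i' = 0 := hmin i' hi'j0
        have h2 : (Pi.single j0 1 : Fin n → ℕ) i' = 0 :=
          Pi.single_eq_of_ne (ne_of_lt hi'j0) 1
        simp [h1, h2]
      exact (pdMulti_succ f hzero).symm
    · push_neg at hij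
      have hγ'K : mdeg γ' ≤ K := by omega
      have hγ'd : mdeg γ' ≤ d := by omega
      set g := pdMulti γ' f with hg
      have hgd : Differentiable ℝ g := hf γ' hγ'K
      have hpart : ∀ j, pdVec (esingle j) g = pdMulti (γ' + Pi.single j 1) f :=
        fun j => ih γ' hγ'd hγ'K j
      have hmdeg' : ∀ j : Fin n, mdeg (γ' + Pi.single j 1) ≤ K := by
        intro j; rw [mdeg_add, mdeg_single]; omega
      have hdp : ∀ j, Differentiable ℝ (pdVec (esingle j) g) := by
        intro j; rw [hpart j]; exact hf _ (hmdeg' j)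
      have hf' : Differentiable ℝ (fun x => fderiv ℝ g x) := by
        have hrep : (fun x => fderiv ℝ g x)
            = fun x => ∑ j, (EuclideanSpace.proj j : En n →L[ℝ] ℝ).smulRight
                (pdVec (esingle j) g x) := funext fun x => clm_rep _
        rw [hrep]
        apply Differentiable.fun_sum
        intro j _
        exact (ContinuousLinearMap.smulRightL ℝ (En n) ℂ
          ((EuclideanSpace.proj j : En n →L[ℝ] ℝ))).differentiable.comp (hdp j)
      have hsymm : ∀ (x : En n) (v w : En n),
          fderiv ℝ (fun y => fderiv ℝ g y) x v w = fderiv ℝ (fun y => fderiv ℝ g y) x w v := by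
        intro x v w
        exact second_derivative_symmetric (fun y => (hgd y).hasFDerivAt)
          ((hf' x).hasFDerivAt) v w
      have hcompute : ∀ (v w : En n) (x : En n),
          pdVec v (pdVec w g) x = fderiv ℝ (fun y => fderiv ℝ g y) x v w := by
        intro v w x
        have h2 : HasFDerivAt (pdVec w g)
            ((ContinuousLinearMap.apply ℝ ℂ w).comp (fderiv ℝ (fun y => fderiv ℝ g y) x)) x :=
          ((ContinuousLinearMap.apply ℝ ℂ w).hasFDerivAt).comp x (hf' x).hasFDerivAt
        show fderiv ℝ (pdVec w g) x v = _
        rw [h2.fderiv]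
        rfl
      have hstep : pdMulti γ f = pdVec (esingle j0) g := by
        rw [hdecomp]; exact pdMulti_succ f hmin
      have hlast : pdVec (esingle j0) (pdMulti (γ' + Pi.single i 1) f)
          = pdMulti (γ' + Pi.single i 1 + Pi.single j0 1) f := by
        refine (pdMulti_succ f ?_).symm
        intro i' hi'
        have h1 : γ' i' = 0 := hmin i' hi'
        have h2 : (Pi.single i 1 : Fin n → ℕ) i' = 0 :=
          Pi.single_eq_of_ne (ne_of_lt (lt_trans hi' hij)) 1
        simp [h1, h2]
      have hfinal : γ' + Pi.single i 1 + Pi.single j0 1 = γ + Pi.single i 1 := by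
        rw [hdecomp]; abel
      funext x
      calc pdVec (esingle i) (pdMulti γ f) x
          = pdVec (esingle i) (pdVec (esingle j0) g) x := by rw [hstep]
        _ = fderiv ℝ (fun y => fderiv ℝ g y) x (esingle i) (esingle j0) := hcompute _ _ x
        _ = fderiv ℝ (fun y => fderiv ℝ g y) x (esingle j0) (esingle i) := hsymm x _ _
        _ = pdVec (esingle j0) (pdVec (esingle i) g) x := (hcompute _ _ x).symm
        _ = pdVec (esingle j0) (pdMulti (γ' + Pi.single i 1) f) x := by rw [hpart i]
        _ = pdMulti (γ' + Pi.single i 1 + Pi.single j0 1) f x := by rw [hlast]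
        _ = pdMulti (γ + Pi.single i 1) f x := by rw [hfinal]

end Comm
section LimDer
variable {n : ℕ}

lemma limder {f : ℕ → En n → ℂ} {g : En n → ℂ} {h : Fin n → En n → ℂ}
    (hdf : ∀ l, Differentiable ℝ (f l))
    (hfg : ∀ x, Tendsto (fun l => f l x) atTop (𝓝 (g x)))
    (hpart : ∀ j, TendstoLocallyUniformly (fun l x => fderiv ℝ (f l) x (esingle j)) (h j) atTop) :
    ∀ x : En n, HasFDerivAt g
      (∑ j, (EuclideanSpace.proj j : En n →L[ℝ] ℝ).smulRight (h j x)) x := by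
  have key : TendstoLocallyUniformly (fun l x => fderiv ℝ (f l) x)
      (fun x => ∑ j, (EuclideanSpace.proj j : En n →L[ℝ] ℝ).smulRight (h j x)) atTop := by
    rw [tendstoLocallyUniformly_iff_forall_isCompact]
    intro K hK
    rw [Metric.tendstoUniformlyOn_iff]
    intro ε hε
    set δ := ε / (n + 1) / 2 with hδdef
    have hδpos : 0 < δ := by positivity
    have hj : ∀ᶠ l in atTop, ∀ j : Fin n, ∀ y ∈ K,
        dist (h j y) (fderiv ℝ (f l) y (esingle j)) < δ := by
      rw [eventually_all]
      intro j
      exact Metric.tendstoUniformlyOn_iff.mp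
        (tendstoLocallyUniformly_iff_forall_isCompact.mp (hpart j) K hK) δ hδpos
    filter_upwards [hj] with l hl y hy
    rw [dist_eq_norm]
    have hb : ∀ j : Fin n,
        ‖((∑ i, (EuclideanSpace.proj i : En n →L[ℝ] ℝ).smulRight (h i y))
          - fderiv ℝ (f l) y) (esingle j)‖ ≤ δ := by
      intro j
      have h1 : ((∑ i, (EuclideanSpace.proj i : En n →L[ℝ] ℝ).smulRight (h i y))
          - fderiv ℝ (f l) y) (esingle j)
          = (∑ i, (EuclideanSpace.proj i : En n →L[ℝ] ℝ).smulRight (h i y)) (esingle j)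
            - fderiv ℝ (f l) y (esingle j) := rfl
      have h2 : (∑ i, (EuclideanSpace.proj i : En n →L[ℝ] ℝ).smulRight (h i y)) (esingle j)
          = h j y := by
        rw [ContinuousLinearMap.sum_apply]
        have h3 : ∀ i : Fin n,
            ((EuclideanSpace.proj i : En n →L[ℝ] ℝ).smulRight (h i y)) (esingle j)
            = (if i = j then (1:ℝ) else 0) • h i y := by
          intro i
          rw [ContinuousLinearMap.smulRight_apply]
          congr 1
          show (esingle j) i = _
          rw [esingle, EuclideanSpace.single_apply]
        simp_rw [h3, ite_smul, one_smul, zero_smul]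
        rw [Finset.sum_ite_eq' Finset.univ j (fun i => h i y)]; simp
      rw [h1, h2, ← dist_eq_norm]
      exact le_of_lt (hl j y hy)
    have hnorm := clm_norm_le _ hb
    calc ‖(fun x => ∑ j, (EuclideanSpace.proj j : En n →L[ℝ] ℝ).smulRight (h j x)) y
        - fderiv ℝ (f l) y‖ ≤ n * δ := hnorm
      _ < ε := by
          rw [hδdef]
          rw [div_div]
          have h4 : (n : ℝ) < (n+1)*2 := by push_cast; nlinarith [Nat.cast_nonneg (α := ℝ) n]
          calc (n : ℝ) * (ε / ((n + 1) * 2)) < ((n:ℝ)+1)*2 * (ε / ((n + 1) * 2)) := by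
                apply mul_lt_mul_of_pos_right _ (by positivity)
                push_cast
                nlinarith [Nat.cast_nonneg (α := ℝ) n]
            _ = ε := by field_simp
  intro x
  exact hasFDerivAt_of_tendstoLocallyUniformlyOn isOpen_univ
    (tendstoLocallyUniformlyOn_univ.mpr key)
    (fun l y _ => (hdf l y).hasFDerivAt) (fun y _ => hfg y) (Set.mem_univ x)

lemma limder' {f : ℕ → En n → ℂ} {g : En n → ℂ} {h : Fin n → En n → ℂ}
    (hdf : ∀ l, Differentiable ℝ (f l))
    (hfg : ∀ x, Tendsto (fun l => f l x) atTop (𝓝 (g x)))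
    (hpart : ∀ j, TendstoLocallyUniformly (fun l x => fderiv ℝ (f l) x (esingle j)) (h j) atTop) :
    Differentiable ℝ g ∧ ∀ j, pdVec (esingle j) g = h j := by
  have H := limder hdf hfg hpart
  constructor
  · exact fun x => (H x).differentiableAt
  · intro j
    funext x
    show fderiv ℝ g x (esingle j) = h j x
    rw [(H x).fderiv]
    rw [ContinuousLinearMap.sum_apply]
    have h3 : ∀ i : Fin n,
        ((EuclideanSpace.proj i : En n →L[ℝ] ℝ).smulRight (h i x)) (esingle j)
        = (if i = j then (1:ℝ) else 0) • h i x := by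
      intro i
      rw [ContinuousLinearMap.smulRight_apply]
      congr 1
      show (esingle j) i = _
      rw [esingle, EuclideanSpace.single_apply]
    simp_rw [h3, ite_smul, one_smul, zero_smul]
    rw [Finset.sum_ite_eq' Finset.univ j (fun i => h i x)]; simp

end LimDer
section Hold

lemma exists_small_rpow {c sh ε : ℝ} (hs : 0 < sh) (hc : 0 ≤ c) (hε : 0 < ε) :
    ∃ δ : ℝ, 0 < δ ∧ c * δ ^ sh < ε := by
  rcases eq_or_lt_of_le hc with hc0 | hcpos
  · exact ⟨1, one_pos, by rw [← hc0, zero_mul]; exact hε⟩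
  · set r := min 1 (ε / c / 2) with hr
    have hrpos : 0 < r := lt_min one_pos (by positivity)
    refine ⟨r ^ (1/sh), Real.rpow_pos_of_pos hrpos _, ?_⟩
    have h1 : (r ^ (1/sh)) ^ sh = r := by
      rw [← Real.rpow_mul hrpos.le, one_div_mul_cancel hs.ne', Real.rpow_one]
    rw [h1]
    have h2 : r ≤ ε / c / 2 := min_le_right _ _
    have h3 : c * (ε / c / 2) = ε / 2 := by field_simp
    calc c * r ≤ c * (ε / c / 2) := mul_le_mul_of_nonneg_left h2 hc
      _ = ε / 2 := h3
      _ < ε := by linarith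

lemma hol_of_lip {V : Type*} [NormedAddCommGroup V] {s : ℝ} {f : V → ℂ} {L B : ℝ}
    (hs0 : 0 < s) (hs1 : s ≤ 1) (hB : 0 ≤ B) (hL : 0 ≤ L)
    (hlip : ∀ z w, ‖f z - f w‖ ≤ L * ‖z - w‖) (hbdd : ∀ z, ‖f z‖ ≤ B) :
    ∀ z w, ‖f z - f w‖ ≤ (L + 2*B) * ‖z - w‖ ^ s := by
  intro z w
  by_cases hzw : z = w
  · subst hzw
    simp only [sub_self, norm_zero]
    positivity
  have ht : 0 < ‖z - w‖ := by rwa [norm_pos_iff, sub_ne_zero]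
  by_cases h1 : ‖z - w‖ ≤ 1
  · calc ‖f z - f w‖ ≤ L * ‖z - w‖ := hlip z w
      _ ≤ L * ‖z - w‖ ^ s := by
          apply mul_le_mul_of_nonneg_left _ hL
          calc ‖z-w‖ = ‖z-w‖ ^ (1:ℝ) := (Real.rpow_one _).symm
            _ ≤ ‖z-w‖ ^ s := Real.rpow_le_rpow_of_exponent_ge ht h1 hs1
      _ ≤ (L + 2*B) * ‖z-w‖ ^ s := by
          apply mul_le_mul_of_nonneg_right _ (Real.rpow_nonneg ht.le s)
          linarith
  · push_neg at h1
    have h2 : 1 ≤ ‖z - w‖ ^ s :=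
      Real.one_le_rpow h1.le hs0.le
    calc ‖f z - f w‖ ≤ ‖f z‖ + ‖f w‖ := norm_sub_le _ _
      _ ≤ 2 * B := by linarith [hbdd z, hbdd w]
      _ ≤ (2*B) * ‖z-w‖^s := le_mul_of_one_le_right (by linarith) h2
      _ ≤ (L + 2*B) * ‖z-w‖^s := by
          apply mul_le_mul_of_nonneg_right _ (Real.rpow_nonneg ht.le s)
          linarith

lemma tendstoUniformlyOn_of_equicont {X : Type*} [MetricSpace X] {f : ℕ → X → ℂ} {g : X → ℂ}
    {c sh : ℝ} (hs : 0 < sh) (hc : 0 ≤ c)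
    (hf : ∀ l x y, dist (f l x) (f l y) ≤ c * dist x y ^ sh)
    (hconv : ∀ x, Tendsto (fun l => f l x) atTop (𝓝 (g x)))
    {K : Set X} (hK : IsCompact K) :
    TendstoUniformlyOn f g atTop K := by
  have hg : ∀ x y, dist (g x) (g y) ≤ c * dist x y ^ sh := by
    intro x y
    exact le_of_tendsto ((hconv x).dist (hconv y))
      (Filter.Eventually.of_forall (fun l => hf l x y))
  rw [Metric.tendstoUniformlyOn_iff]
  intro ε hε
  obtain ⟨δ, hδpos, hδ⟩ := exists_small_rpow (c := c) hs hc (show (0:ℝ) < ε/3 by linarith)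
  obtain ⟨T, hTK, hTcov⟩ := hK.elim_nhds_subcover (fun x => Metric.ball x δ)
    (fun x _ => Metric.ball_mem_nhds x hδpos)
  have hev : ∀ᶠ l in atTop, ∀ t ∈ T, dist (g t) (f l t) < ε / 3 := by
    rw [Filter.eventually_all_finset]
    intro t _
    have h1 : Tendsto (fun l => dist (g t) (f l t)) atTop (𝓝 0) := by
      simpa using (tendsto_const_nhds (x := g t)).dist (hconv t)
    have := (Metric.tendsto_nhds.mp h1) (ε/3) (by linarith)
    filter_upwards [this] with l hl
    simpa [Real.dist_eq, _root_.abs_of_nonneg dist_nonneg] using hl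
  filter_upwards [hev] with l hl x hx
  obtain ⟨t, htT, hxt⟩ : ∃ t ∈ T, x ∈ Metric.ball t δ := by
    simpa using hTcov hx
  have hdist : dist x t < δ := Metric.mem_ball.mp hxt
  have hest : c * dist x t ^ sh < ε / 3 := by
    calc c * dist x t ^ sh ≤ c * δ ^ sh := by
          apply mul_le_mul_of_nonneg_left _ hc
          exact Real.rpow_le_rpow dist_nonneg hdist.le hs.le
      _ < ε / 3 := hδ
  calc dist (g x) (f l x)
      ≤ dist (g x) (g t) + dist (g t) (f l t) + dist (f l t) (f l x) :=
        dist_triangle4 _ _ _ _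
    _ < ε/3 + ε/3 + ε/3 := by
        have e1 : dist (g x) (g t) < ε/3 := lt_of_le_of_lt (hg x t) hest
        have e3 : dist (f l t) (f l x) < ε/3 := by
          have := hf l t x
          rw [dist_comm t x] at this
          exact lt_of_le_of_lt this hest
        have e2 := hl t htT
        linarith
    _ = ε := by ring

lemma converges_everywhere {X : Type*} [MetricSpace X] {f : ℕ → X → ℂ}
    {c sh : ℝ} (hs : 0 < sh) (hc : 0 ≤ c)
    (hf : ∀ l x y, dist (f l x) (f l y) ≤ c * dist x y ^ sh)
    {D : Set X} (hD : Dense D)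
    (hconv : ∀ d ∈ D, ∃ z : ℂ, Tendsto (fun l => f l d) atTop (𝓝 z)) :
    ∀ x, ∃ z, Tendsto (fun l => f l x) atTop (𝓝 z) := by
  intro x
  have hcauchy : CauchySeq (fun l => f l x) := by
    rw [Metric.cauchySeq_iff]
    intro ε hε
    obtain ⟨δ, hδpos, hδ⟩ := exists_small_rpow (c := c) hs hc (show (0:ℝ) < ε/3 by linarith)
    obtain ⟨d, hdD, hdx⟩ := hD.exists_dist_lt x hδpos
    obtain ⟨z, hz⟩ := hconv d hdD
    obtain ⟨N, hN⟩ := Metric.cauchySeq_iff.mp hz.cauchySeq (ε/3) (by linarith)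
    refine ⟨N, fun k hk l hl => ?_⟩
    have hest : c * dist x d ^ sh < ε / 3 := by
      calc c * dist x d ^ sh ≤ c * δ ^ sh := by
            apply mul_le_mul_of_nonneg_left _ hc
            exact Real.rpow_le_rpow dist_nonneg hdx.le hs.le
        _ < ε / 3 := hδ
    have e1 : dist (f k x) (f k d) < ε/3 := lt_of_le_of_lt (hf k x d) hest
    have e3 : dist (f l d) (f l x) < ε/3 := by
      have := hf l d x
      rw [dist_comm d x] at this
      exact lt_of_le_of_lt this hest
    have e2 := hN k hk l hl
    calc dist (f k x) (f l x)
        ≤ dist (f k x) (f k d) + dist (f k d) (f l d) + dist (f l d) (f l x) :=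
          dist_triangle4 _ _ _ _
      _ < ε/3 + ε/3 + ε/3 := by linarith
      _ = ε := by ring
  exact cauchySeq_tendsto_of_complete hcauchy

end Hold
section SymCons
variable {n m : ℕ} {s : ℝ} {M : ℕ∞} {p : En n → En n → ℂ} {C : (Fin n → ℕ) → ℝ}

lemma mixD_zero (α : Fin n → ℕ) (p : En n → En n → ℂ) : mixD α 0 p = dXi α p := by
  funext x ξ
  show pdMulti 0 (fun x' => dXi α p x' ξ) x = _
  rw [pdMulti_zero]

lemma mdeg_zero : mdeg (0 : Fin n → ℕ) = 0 := by simp [mdeg]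

lemma jb_exp_zero (k : ℝ) (ξ : En n) : jb ξ ^ ((0:ℝ) - 0 * k) = 1 := by
  norm_num

lemma symwc_bound (hs : SymWC n m s 0 0 M p C) {α β : Fin n → ℕ}
    (hα : ((mdeg α : ℕ) : ℕ∞) ≤ M) (hβ : mdeg β ≤ m) (x ξ : En n) :
    ‖mixD α β p x ξ‖ ≤ C α := by
  have h := (hs.2.2.2 α hα).1 β hβ x ξ
  rwa [jb_exp_zero, mul_one] at h

lemma symwc_holm (hs : SymWC n m s 0 0 M p C) {α β : Fin n → ℕ}
    (hα : ((mdeg α : ℕ) : ℕ∞) ≤ M) (hβ : mdeg β = m) (x y ξ : En n) :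
    ‖mixD α β p x ξ - mixD α β p y ξ‖ ≤ C α * ‖x - y‖ ^ s := by
  have h := (hs.2.2.2 α hα).2 β hβ x y ξ
  rwa [jb_exp_zero, mul_one] at h

lemma symwc_Cnonneg (hs : SymWC n m s 0 0 M p C) {α : Fin n → ℕ}
    (hα : ((mdeg α : ℕ) : ℕ∞) ≤ M) : 0 ≤ C α :=
  le_trans (norm_nonneg _) (symwc_bound hs hα (by rw [mdeg_zero]; omega) 0 0)

lemma symwc_comm_xi (hs : SymWC n m s 0 0 M p C) {α : Fin n → ℕ}
    (hα : ((mdeg α + 1 : ℕ) : ℕ∞) ≤ M) (x : En n) (i : Fin n) :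
    pdVec (esingle i) (fun ξ => dXi α p x ξ) = fun ξ => dXi (α + Pi.single i 1) p x ξ := by
  have hf : ∀ δ : Fin n → ℕ, mdeg δ ≤ mdeg α → Differentiable ℝ (pdMulti δ (p x)) := by
    intro δ hδ
    refine hs.1 δ ?_ x
    refine le_trans ?_ hα
    exact Nat.cast_le.mpr (by omega)
  exact comm_pd hf α le_rfl i

lemma symwc_comm_x (hs : SymWC n m s 0 0 M p C) {α β : Fin n → ℕ}
    (hα : ((mdeg α : ℕ) : ℕ∞) ≤ M) (hβ : mdeg β + 1 ≤ m) (ξ : En n) (i : Fin n) :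
    pdVec (esingle i) (fun x => mixD α β p x ξ)
      = fun x => mixD α (β + Pi.single i 1) p x ξ := by
  have hf : ∀ δ : Fin n → ℕ, mdeg δ ≤ mdeg β →
      Differentiable ℝ (pdMulti δ (fun x => dXi α p x ξ)) := by
    intro δ hδ
    exact hs.2.1 α δ hα (by omega) ξ
  exact comm_pd hf β le_rfl i

lemma symwc_fderiv_x_bound (hs : SymWC n m s 0 0 M p C) {α β : Fin n → ℕ}
    (hα : ((mdeg α : ℕ) : ℕ∞) ≤ M) (hβ : mdeg β + 1 ≤ m) (ξ x : En n) :
    ‖fderiv ℝ (fun x => mixD α β p x ξ) x‖ ≤ n * C α := by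
  apply clm_norm_le
  intro j
  have h1 : fderiv ℝ (fun x => mixD α β p x ξ) x (esingle j)
      = mixD α (β + Pi.single j 1) p x ξ := by
    have := congrFun (symwc_comm_x hs hα hβ ξ j) x
    exact this
  rw [h1]
  exact symwc_bound hs hα (by rw [mdeg_add, mdeg_single]; omega) x ξ

lemma symwc_lip_x (hs : SymWC n m s 0 0 M p C) {α β : Fin n → ℕ}
    (hα : ((mdeg α : ℕ) : ℕ∞) ≤ M) (hβ : mdeg β + 1 ≤ m) (ξ x y : En n) :
    ‖mixD α β p x ξ - mixD α β p y ξ‖ ≤ (n * C α) * ‖x - y‖ := by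
  have hdiff : ∀ z ∈ (Set.univ : Set (En n)), DifferentiableAt ℝ (fun x => mixD α β p x ξ) z :=
    fun z _ => (hs.2.1 α β hα hβ ξ) z
  have hb : ∀ z ∈ (Set.univ : Set (En n)), ‖fderiv ℝ (fun x => mixD α β p x ξ) z‖ ≤ n * C α :=
    fun z _ => symwc_fderiv_x_bound hs hα hβ ξ z
  have := convex_univ.norm_image_sub_le_of_norm_fderiv_le hdiff hb
    (Set.mem_univ y) (Set.mem_univ x)
  exact this

lemma symwc_holx (hs : SymWC n m s 0 0 M p C) (hs0 : 0 < s) (hs1 : s ≤ 1)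
    {α β : Fin n → ℕ} (hα : ((mdeg α : ℕ) : ℕ∞) ≤ M) (hβ : mdeg β ≤ m) (ξ x y : En n) :
    ‖mixD α β p x ξ - mixD α β p y ξ‖ ≤ ((n : ℝ) * C α + 2 * C α + C α) * ‖x - y‖ ^ s := by
  have hC0 : 0 ≤ C α := symwc_Cnonneg hs hα
  have hCn : (0:ℝ) ≤ (n : ℝ) * C α := by positivity
  rcases eq_or_lt_of_le hβ with hβm | hβm
  · have h := symwc_holm hs hα hβm x y ξ
    refine le_trans h ?_
    apply mul_le_mul_of_nonneg_right _ (Real.rpow_nonneg (norm_nonneg _) s)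
    linarith
  · have h := hol_of_lip (f := fun x => mixD α β p x ξ) hs0 hs1 hC0 hCn
      (fun z w => symwc_lip_x hs hα (by omega) ξ z w)
      (fun z => symwc_bound hs hα hβ z ξ) x y
    refine le_trans h ?_
    apply mul_le_mul_of_nonneg_right _ (Real.rpow_nonneg (norm_nonneg _) s)
    linarith

end SymCons
section FTC
variable {n m : ℕ} {s : ℝ} {M : ℕ∞} {p : En n → En n → ℂ} {C : (Fin n → ℕ) → ℝ}

lemma mixD_as_pdMulti (α β : Fin n → ℕ) (p : En n → En n → ℂ) (η : En n) :
    (fun x' => mixD α β p x' η) = pdMulti β (fun x'' => dXi α p x'' η) := rfl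

lemma mixD_canon {α β β' : Fin n → ℕ} {j0 : Fin n} (p : En n → En n → ℂ)
    (hdecomp : β = β' + Pi.single j0 1) (hmin : ∀ i', i' < j0 → β' i' = 0) (η : En n) :
    pdVec (esingle j0) (fun x' => mixD α β' p x' η) = fun x' => mixD α β p x' η := by
  rw [mixD_as_pdMulti α β p η, hdecomp]
  exact (pdMulti_succ _ hmin).symm

lemma symwc_ftc (hs : SymWC n m s 0 0 M p C) {α : Fin n → ℕ} {i : Fin n}
    (hα : ((mdeg α + 1 : ℕ) : ℕ∞) ≤ M) :
    ∀ β : Fin n → ℕ, mdeg β ≤ m → ∀ (x ξ : En n) (t : ℝ),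
      mixD α β p x (ξ + t • esingle i) - mixD α β p x ξ
        = ∫ τ in (0:ℝ)..t, mixD (α + Pi.single i 1) β p x (ξ + τ • esingle i) := by
  have hαM : ((mdeg α : ℕ) : ℕ∞) ≤ M := le_trans (Nat.cast_le.mpr (by omega)) hα
  have hα1M : ((mdeg (α + Pi.single i 1) : ℕ) : ℕ∞) ≤ M := by
    rw [mdeg_add, mdeg_single]; exact hα
  have hline : ∀ (ξ : En n) (τ : ℝ),
      HasDerivAt (fun τ : ℝ => ξ + τ • esingle i) (esingle i) τ := by
    intro ξ τ
    simpa using ((hasDerivAt_id τ).smul_const (esingle i)).const_add ξ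
  have hcurve : ∀ (x ξ : En n), Continuous (fun τ : ℝ => ((x, ξ + τ • esingle i) : En n × En n)) := by
    intro x ξ
    apply Continuous.prodMk continuous_const
    exact continuous_const.add (continuous_id.smul continuous_const)
  suffices H : ∀ (d : ℕ) (β : Fin n → ℕ), mdeg β ≤ d → mdeg β ≤ m → ∀ (x ξ : En n) (t : ℝ),
      mixD α β p x (ξ + t • esingle i) - mixD α β p x ξ
        = ∫ τ in (0:ℝ)..t, mixD (α + Pi.single i 1) β p x (ξ + τ • esingle i) by
    intro β hβ x ξ t
    exact H (mdeg β) β le_rfl hβ x ξ t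
  have base : ∀ (x ξ : En n) (t : ℝ),
      mixD α 0 p x (ξ + t • esingle i) - mixD α 0 p x ξ
        = ∫ τ in (0:ℝ)..t, mixD (α + Pi.single i 1) 0 p x (ξ + τ • esingle i) := by
    intro x ξ t
    simp only [mixD_zero]
    have hderiv : ∀ τ : ℝ, HasDerivAt (fun τ => dXi α p x (ξ + τ • esingle i))
        (dXi (α + Pi.single i 1) p x (ξ + τ • esingle i)) τ := by
      intro τ
      have hd : HasFDerivAt (fun η => dXi α p x η)
          (fderiv ℝ (fun η => dXi α p x η) (ξ + τ • esingle i)) (ξ + τ • esingle i) :=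
        ((hs.1 α hα x) (ξ + τ • esingle i)).hasFDerivAt
      have hcomp := hd.comp_hasDerivAt τ (hline ξ τ)
      have heq : fderiv ℝ (fun η => dXi α p x η) (ξ + τ • esingle i) (esingle i)
          = dXi (α + Pi.single i 1) p x (ξ + τ • esingle i) :=
        congrFun (symwc_comm_xi hs hα x i) (ξ + τ • esingle i)
      rwa [heq] at hcomp
    have hcont : Continuous (fun τ : ℝ => dXi (α + Pi.single i 1) p x (ξ + τ • esingle i)) := by
      have hjoint := hs.2.2.1 (α + Pi.single i 1) 0 hα1M (by rw [mdeg_zero]; omega)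
      rw [mixD_zero] at hjoint
      exact hjoint.comp (hcurve x ξ)
    have hint := intervalIntegral.integral_eq_sub_of_hasDerivAt
      (f := fun τ => dXi α p x (ξ + τ • esingle i)) (fun τ _ => hderiv τ)
      (hcont.intervalIntegrable 0 t)
    rw [hint]
    simp
  intro d
  induction d with
  | zero =>
    intro β hβd _ x ξ t
    have h0 : β = 0 := mdeg_eq_zero (Nat.le_zero.mp hβd)
    subst h0
    exact base x ξ t
  | succ d ih =>
    intro β hβd hβm x ξ t
    by_cases h0 : β = 0
    · subst h0; exact base x ξ t
    obtain ⟨β', j0, hdecomp, hmin, hmdeg⟩ := exists_canon h0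
    have hβ'd : mdeg β' ≤ d := by omega
    have hβ'm : mdeg β' ≤ m := by omega
    have hβ'm1 : mdeg β' + 1 ≤ m := by omega
    -- parametric integral setup
    set F : En n → ℝ → ℂ :=
      fun x' τ => mixD (α + Pi.single i 1) β' p x' (ξ + τ • esingle i) with hF
    set F' : En n → ℝ → (En n →L[ℝ] ℂ) :=
      fun x' τ => fderiv ℝ (fun y => F y τ) x' with hF'
    have hFcont : ∀ x', Continuous (fun τ => F x' τ) := by
      intro x'
      exact (hs.2.2.1 (α + Pi.single i 1) β' hα1M hβ'm).comp (hcurve x' ξ)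
    have hrep : ∀ (x' : En n) (τ : ℝ), F' x' τ
        = ∑ j, (EuclideanSpace.proj j : En n →L[ℝ] ℝ).smulRight
            (mixD (α + Pi.single i 1) (β' + Pi.single j 1) p x' (ξ + τ • esingle i)) := by
      intro x' τ
      rw [clm_rep (F' x' τ)]
      refine Finset.sum_congr rfl fun j _ => ?_
      congr 1
      exact congrFun (symwc_comm_x hs hα1M hβ'm1 (ξ + τ • esingle i) j) x'
    have hF'cont : ∀ x', Continuous (fun τ => F' x' τ) := by
      intro x'
      have : (fun τ => F' x' τ) = fun τ => ∑ j, (EuclideanSpace.proj j : En n →L[ℝ] ℝ).smulRight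
          (mixD (α + Pi.single i 1) (β' + Pi.single j 1) p x' (ξ + τ • esingle i)) :=
        funext fun τ => hrep x' τ
      rw [this]
      apply continuous_finset_sum
      intro j _
      have hc1 : Continuous (fun τ : ℝ =>
          mixD (α + Pi.single i 1) (β' + Pi.single j 1) p x' (ξ + τ • esingle i)) := by
        refine (hs.2.2.1 (α + Pi.single i 1) (β' + Pi.single j 1) hα1M ?_).comp (hcurve x' ξ)
        rw [mdeg_add, mdeg_single]; omega
      exact ((ContinuousLinearMap.smulRightL ℝ (En n) ℂ
        (EuclideanSpace.proj j : En n →L[ℝ] ℝ)).continuous).comp hc1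
    have hdiffF : ∀ (τ : ℝ) (x' : En n), DifferentiableAt ℝ (fun y => F y τ) x' :=
      fun τ x' => (hs.2.1 (α + Pi.single i 1) β' hα1M hβ'm1 (ξ + τ • esingle i)) x'
    have hres : HasFDerivAt (fun x' => ∫ τ in (0:ℝ)..t, F x' τ)
        (∫ τ in (0:ℝ)..t, F' x τ) x := by
      apply intervalIntegral.hasFDerivAt_integral_of_dominated_of_fderiv_le
        (s := Metric.ball x 1) (bound := fun _ => (n : ℝ) * C (α + Pi.single i 1)) (Metric.ball_mem_nhds x one_pos)
      · exact Filter.Eventually.of_forall fun x' => (hFcont x').aestronglyMeasurable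
      · exact (hFcont x).intervalIntegrable 0 t
      · exact (hF'cont x).aestronglyMeasurable
      · refine Filter.Eventually.of_forall fun τ _ x' _ => ?_
        exact symwc_fderiv_x_bound hs hα1M hβ'm1 (ξ + τ • esingle i) x'
      · exact intervalIntegrable_const
      · exact Filter.Eventually.of_forall fun τ _ x' _ => (hdiffF τ x').hasFDerivAt
    -- main computation
    have hIH : (fun x' => mixD α β' p x' (ξ + t • esingle i) - mixD α β' p x' ξ)
        = fun x' => ∫ τ in (0:ℝ)..t, F x' τ :=
      funext fun x' => ih β' hβ'd hβ'm x' ξ t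
    have hdA : DifferentiableAt ℝ (fun x' => mixD α β' p x' (ξ + t • esingle i)) x :=
      (hs.2.1 α β' hαM hβ'm1 (ξ + t • esingle i)) x
    have hdB : DifferentiableAt ℝ (fun x' => mixD α β' p x' ξ) x :=
      (hs.2.1 α β' hαM hβ'm1 ξ) x
    have hLHS : mixD α β p x (ξ + t • esingle i) - mixD α β p x ξ
        = pdVec (esingle j0)
            (fun x' => mixD α β' p x' (ξ + t • esingle i) - mixD α β' p x' ξ) x := by
      rw [← congrFun (mixD_canon p hdecomp hmin (ξ + t • esingle i)) x,
        ← congrFun (mixD_canon p hdecomp hmin ξ) x]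
      show _ = fderiv ℝ _ x (esingle j0)
      rw [fderiv_fun_sub hdA hdB]
      rfl
    rw [hLHS, hIH]
    have hpd : pdVec (esingle j0) (fun x' => ∫ τ in (0:ℝ)..t, F x' τ) x
        = (∫ τ in (0:ℝ)..t, F' x τ) (esingle j0) := by
      show fderiv ℝ _ x (esingle j0) = _
      rw [hres.fderiv]
    rw [hpd, ContinuousLinearMap.intervalIntegral_apply
      ((hF'cont x).intervalIntegrable 0 t) (esingle j0)]
    refine intervalIntegral.integral_congr fun τ _ => ?_
    show F' x τ (esingle j0) = _
    have : F' x τ (esingle j0) = pdVec (esingle j0) (fun y => F y τ) x := rfl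
    rw [this, congrFun (mixD_canon p hdecomp hmin (ξ + τ • esingle i)) x]

end FTC
section LipXi
variable {n m : ℕ} {s : ℝ} {M : ℕ∞} {p : En n → En n → ℂ} {C : (Fin n → ℕ) → ℝ}

lemma symwc_step_xi (hs : SymWC n m s 0 0 M p C) {α β : Fin n → ℕ} {i : Fin n}
    (hα : ((mdeg α + 1 : ℕ) : ℕ∞) ≤ M) (hβ : mdeg β ≤ m) (x w : En n) (t : ℝ) :
    ‖mixD α β p x (w + t • esingle i) - mixD α β p x w‖ ≤ C (α + Pi.single i 1) * |t| := by
  have hα1M : ((mdeg (α + Pi.single i 1) : ℕ) : ℕ∞) ≤ M := by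
    rw [mdeg_add, mdeg_single]; exact hα
  rw [symwc_ftc hs hα β hβ x w t]
  have hb := intervalIntegral.norm_integral_le_of_norm_le_const
    (C := C (α + Pi.single i 1)) (a := (0:ℝ)) (b := t)
    (f := fun τ => mixD (α + Pi.single i 1) β p x (w + τ • esingle i))
    (fun τ _ => symwc_bound hs hα1M hβ x (w + τ • esingle i))
  simpa using hb

lemma symwc_lip_xi (hs : SymWC n m s 0 0 M p C) {α β : Fin n → ℕ}
    (hα : ((mdeg α + 1 : ℕ) : ℕ∞) ≤ M) (hβ : mdeg β ≤ m) (x ξ η : En n) :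
    ‖mixD α β p x ξ - mixD α β p x η‖
      ≤ (∑ i, C (α + Pi.single i 1)) * ‖ξ - η‖ := by
  set w : ℕ → En n := fun k => (WithLp.toLp 2 (fun j : Fin n => if (j : ℕ) < k then ξ j else η j) : En n)
    with hw
  have hw0 : w 0 = η := by ext j; simp [hw]
  have hwn : w n = ξ := by
    ext j
    simp only [hw, PiLp.toLp_apply]
    rw [if_pos j.isLt]
  have hstep : ∀ k (hk : k < n),
      w (k+1) = w k + (ξ ⟨k, hk⟩ - η ⟨k, hk⟩) • esingle ⟨k, hk⟩ := by
    intro k hk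
    ext j
    rw [PiLp.add_apply, PiLp.smul_apply]
    by_cases hj : j = ⟨k, hk⟩
    · subst hj
      simp only [hw, Fin.val_mk, PiLp.toLp_apply]
      rw [if_pos (by omega : k < k + 1), if_neg (lt_irrefl k)]
      simp [esingle, EuclideanSpace.single_apply]
    · have hj' : (j : ℕ) ≠ k := fun hc => hj (Fin.ext hc)
      simp only [hw, PiLp.toLp_apply, esingle, EuclideanSpace.single_apply, if_neg hj]
      simp only [smul_eq_mul, mul_zero, add_zero]
      rw [if_congr (by omega : ((j : ℕ) < k + 1) ↔ ((j : ℕ) < k)) rfl rfl]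
  have hnn : ∀ i : Fin n, 0 ≤ C (α + Pi.single i 1) := by
    intro i
    apply symwc_Cnonneg hs
    rw [mdeg_add, mdeg_single]
    exact le_trans (Nat.cast_le.mpr le_rfl) hα
  have key : ∀ k, k ≤ n → ‖mixD α β p x (w k) - mixD α β p x η‖
      ≤ (∑ i ∈ Finset.univ.filter (fun i : Fin n => (i : ℕ) < k),
          C (α + Pi.single i 1)) * ‖ξ - η‖ := by
    intro k
    induction k with
    | zero =>
      intro _
      rw [hw0]
      simp
    | succ k ih =>
      intro hk1
      have hk : k < n := by omega
      set kf : Fin n := ⟨k, hk⟩ with hkf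
      have hkv : (kf : ℕ) = k := rfl
      have hcoord : |ξ kf - η kf| ≤ ‖ξ - η‖ := by
        have := abs_coord_le (ξ - η) kf
        rwa [PiLp.sub_apply] at this
      have h1 : ‖mixD α β p x (w (k+1)) - mixD α β p x (w k)‖
          ≤ C (α + Pi.single kf 1) * ‖ξ - η‖ := by
        rw [hstep k hk]
        refine le_trans (symwc_step_xi hs hα hβ x (w k) _) ?_
        exact mul_le_mul_of_nonneg_left hcoord (hnn kf)
      have hfil : Finset.univ.filter (fun i : Fin n => (i : ℕ) < k+1)
          = insert kf (Finset.univ.filter fun i : Fin n => (i : ℕ) < k) := by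
        ext j
        simp only [Finset.mem_filter, Finset.mem_univ, true_and, Finset.mem_insert]
        constructor
        · intro hj
          by_cases hjk : (j : ℕ) = k
          · exact Or.inl (Fin.ext hjk)
          · exact Or.inr (by omega)
        · rintro (rfl | hj)
          · omega
          · omega
      have hnotmem : kf ∉ Finset.univ.filter (fun i : Fin n => (i : ℕ) < k) := by
        simp [hkf]
      calc ‖mixD α β p x (w (k+1)) - mixD α β p x η‖
          ≤ ‖mixD α β p x (w (k+1)) - mixD α β p x (w k)‖
            + ‖mixD α β p x (w k) - mixD α β p x η‖ := by
            have := norm_sub_le_norm_sub_add_norm_sub (mixD α β p x (w (k+1)))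
              (mixD α β p x (w k)) (mixD α β p x η)
            exact this
        _ ≤ C (α + Pi.single kf 1) * ‖ξ - η‖
            + (∑ i ∈ Finset.univ.filter (fun i : Fin n => (i : ℕ) < k),
                C (α + Pi.single i 1)) * ‖ξ - η‖ := add_le_add h1 (ih (by omega))
        _ = (∑ i ∈ Finset.univ.filter (fun i : Fin n => (i : ℕ) < k+1),
              C (α + Pi.single i 1)) * ‖ξ - η‖ := by
            rw [hfil, Finset.sum_insert hnotmem, add_mul]
  have hfinal := key n le_rfl
  rw [hwn] at hfinal
  refine le_trans hfinal ?_
  apply mul_le_mul_of_nonneg_right _ (norm_nonneg _)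
  apply Finset.sum_le_sum_of_subset_of_nonneg (Finset.filter_subset _ _)
  intro i _ _
  exact hnn i

lemma symwc_hol_joint (hs : SymWC n m s 0 0 M p C) (hs0 : 0 < s) (hs1 : s ≤ 1)
    {α β : Fin n → ℕ} (hα : ((mdeg α + 1 : ℕ) : ℕ∞) ≤ M) (hβ : mdeg β ≤ m)
    (z w : En n × En n) :
    ‖mixD α β p z.1 z.2 - mixD α β p w.1 w.2‖
      ≤ (((n : ℝ) * C α + 2 * C α + C α)
          + ((∑ i, C (α + Pi.single i 1)) + 2 * C α)) * ‖z - w‖ ^ s := by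
  have hαM : ((mdeg α : ℕ) : ℕ∞) ≤ M := le_trans (Nat.cast_le.mpr (by omega)) hα
  have hC0 : 0 ≤ C α := symwc_Cnonneg hs hαM
  have hsum0 : 0 ≤ ∑ i, C (α + Pi.single i 1) := by
    apply Finset.sum_nonneg
    intro i _
    apply symwc_Cnonneg hs
    rw [mdeg_add, mdeg_single]
    exact hα
  have h1 : ‖mixD α β p z.1 z.2 - mixD α β p w.1 z.2‖
      ≤ ((n : ℝ) * C α + 2 * C α + C α) * ‖z - w‖ ^ s := by
    refine le_trans (symwc_holx hs hs0 hs1 hαM hβ z.2 z.1 w.1) ?_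
    apply mul_le_mul_of_nonneg_left _ (by positivity)
    apply Real.rpow_le_rpow (norm_nonneg _) _ hs0.le
    exact (norm_fst_le (z - w))
  have h2 : ‖mixD α β p w.1 z.2 - mixD α β p w.1 w.2‖
      ≤ ((∑ i, C (α + Pi.single i 1)) + 2 * C α) * ‖z - w‖ ^ s := by
    have hh := hol_of_lip (f := fun ξ => mixD α β p w.1 ξ) hs0 hs1 hC0 hsum0
      (fun a b => symwc_lip_xi hs hα hβ w.1 a b)
      (fun a => symwc_bound hs hαM hβ w.1 a) z.2 w.2
    refine le_trans hh ?_
    apply mul_le_mul_of_nonneg_left _ (by positivity)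
    apply Real.rpow_le_rpow (norm_nonneg _) _ hs0.le
    exact (norm_snd_le (z - w))
  calc ‖mixD α β p z.1 z.2 - mixD α β p w.1 w.2‖
      ≤ ‖mixD α β p z.1 z.2 - mixD α β p w.1 z.2‖
        + ‖mixD α β p w.1 z.2 - mixD α β p w.1 w.2‖ :=
        norm_sub_le_norm_sub_add_norm_sub _ _ _
    _ ≤ _ := by
        rw [add_mul]
        exact add_le_add h1 h2

end LipXi
section Recon
variable {n : ℕ}

lemma enat_le_of_add_one_le {a : ℕ} {A : ℕ∞} (h : ((a + 1 : ℕ) : ℕ∞) ≤ A) :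
    ((a : ℕ) : ℕ∞) ≤ A := le_trans (Nat.cast_le.mpr (by omega)) h

lemma enat_add_one_le_of_le_sub_one {a : ℕ} {M : ℕ∞} (hM : 1 ≤ M)
    (h : ((a : ℕ) : ℕ∞) ≤ M - 1) : ((a + 1 : ℕ) : ℕ∞) ≤ M := by
  cases M with
  | top => exact le_top
  | coe k =>
    have hk : 1 ≤ k := by exact_mod_cast hM
    have hsub : ((k : ℕ∞) - 1) = ((k - 1 : ℕ) : ℕ∞) := (ENat.coe_sub k 1).symm
    rw [hsub] at h
    have h' : a ≤ k - 1 := by exact_mod_cast h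
    have h2 : a + 1 ≤ k := by omega
    exact_mod_cast h2

lemma tlu_pointwise {f : ℕ → En n → ℂ} {g : En n → ℂ}
    (h : TendstoLocallyUniformly f g atTop) (x : En n) :
    Tendsto (fun l => f l x) atTop (𝓝 (g x)) :=
  ((tendstoLocallyUniformly_iff_forall_isCompact.mp h) {x} isCompact_singleton).tendsto_at rfl

lemma recon (A : ℕ∞) (F : ℕ → En n → ℂ) (G : (Fin n → ℕ) → En n → ℂ)
    (hdiff : ∀ (l : ℕ) (γ : Fin n → ℕ), ((mdeg γ + 1 : ℕ) : ℕ∞) ≤ A →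
      Differentiable ℝ (pdMulti γ (F l)))
    (hcomm : ∀ (l : ℕ) (γ : Fin n → ℕ) (j : Fin n), ((mdeg γ + 1 : ℕ) : ℕ∞) ≤ A →
      pdVec (esingle j) (pdMulti γ (F l)) = pdMulti (γ + Pi.single j 1) (F l))
    (hconv : ∀ γ : Fin n → ℕ, ((mdeg γ : ℕ) : ℕ∞) ≤ A →
      TendstoLocallyUniformly (fun l => pdMulti γ (F l)) (G γ) atTop) :
    (∀ γ, ((mdeg γ : ℕ) : ℕ∞) ≤ A → pdMulti γ (G 0) = G γ) ∧
    (∀ γ, ((mdeg γ + 1 : ℕ) : ℕ∞) ≤ A → Differentiable ℝ (pdMulti γ (G 0))) := by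
  have step : ∀ γ : Fin n → ℕ, ((mdeg γ + 1 : ℕ) : ℕ∞) ≤ A →
      Differentiable ℝ (G γ) ∧ ∀ j, pdVec (esingle j) (G γ) = G (γ + Pi.single j 1) := by
    intro γ hγ
    have hγA : ((mdeg γ : ℕ) : ℕ∞) ≤ A := enat_le_of_add_one_le hγ
    apply limder' (f := fun l => pdMulti γ (F l)) (g := G γ)
      (h := fun j => G (γ + Pi.single j 1))
    · exact fun l => hdiff l γ hγ
    · exact fun x => tlu_pointwise (hconv γ hγA) x
    · intro j
      have h1 : (fun (l : ℕ) (x : En n) => fderiv ℝ (pdMulti γ (F l)) x (esingle j))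
          = fun l => pdMulti (γ + Pi.single j 1) (F l) := by
        funext l
        exact hcomm l γ j hγ
      rw [h1]
      apply hconv
      rw [mdeg_add, mdeg_single]
      exact hγ
  have main : ∀ (d : ℕ) (γ : Fin n → ℕ), mdeg γ ≤ d → ((mdeg γ : ℕ) : ℕ∞) ≤ A →
      pdMulti γ (G 0) = G γ := by
    intro d
    induction d with
    | zero =>
      intro γ hγ _
      have h0 : γ = 0 := mdeg_eq_zero (Nat.le_zero.mp hγ)
      subst h0
      exact pdMulti_zero _
    | succ d ih =>
      intro γ hγd hγA
      by_cases h0 : γ = 0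
      · subst h0; exact pdMulti_zero _
      obtain ⟨γ', j0, hdecomp, hmin, hm⟩ := exists_canon h0
      have hγ'A1 : ((mdeg γ' + 1 : ℕ) : ℕ∞) ≤ A := by
        rw [← hm] at *
        exact hγA
      have hγ'A : ((mdeg γ' : ℕ) : ℕ∞) ≤ A := enat_le_of_add_one_le hγ'A1
      have hstep := step γ' hγ'A1
      rw [hdecomp, pdMulti_succ _ hmin, ih γ' (by omega) hγ'A, hstep.2 j0]
  constructor
  · exact fun γ hγ => main (mdeg γ) γ le_rfl hγ
  · intro γ hγ
    rw [main (mdeg γ) γ le_rfl (enat_le_of_add_one_le hγ)]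
    exact (step γ hγ).1

lemma tlu_fst {f : ℕ → En n × En n → ℂ} {g : En n × En n → ℂ}
    (h : ∀ K : Set (En n × En n), IsCompact K → TendstoUniformlyOn f g atTop K) (x : En n) :
    TendstoLocallyUniformly (fun l ξ => f l (x, ξ)) (fun ξ => g (x, ξ)) atTop := by
  rw [tendstoLocallyUniformly_iff_forall_isCompact]
  intro K hK
  have h2 := h ({x} ×ˢ K) (isCompact_singleton.prod hK)
  have h3 := h2.comp (fun ξ => ((x, ξ) : En n × En n))
  exact h3.mono (fun ξ hξ => Set.mem_prod.mpr ⟨rfl, hξ⟩)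

lemma tlu_snd {f : ℕ → En n × En n → ℂ} {g : En n × En n → ℂ}
    (h : ∀ K : Set (En n × En n), IsCompact K → TendstoUniformlyOn f g atTop K) (ξ : En n) :
    TendstoLocallyUniformly (fun l x => f l (x, ξ)) (fun x => g (x, ξ)) atTop := by
  rw [tendstoLocallyUniformly_iff_forall_isCompact]
  intro K hK
  have h2 := h (K ×ˢ {ξ}) (hK.prod isCompact_singleton)
  have h3 := h2.comp (fun x => ((x, ξ) : En n × En n))
  exact h3.mono (fun x hx => Set.mem_prod.mpr ⟨hx, rfl⟩)

end Recon

end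

/-! Statement 8 -/
theorem stmt8 (n m : ℕ) (M : ℕ∞) (hM : 1 ≤ M) (s : ℝ) (hs0 : 0 < s) (hs1 : s ≤ 1)
    (p : ℝ → En n → En n → ℂ)
    (hp : ∃ C, ∀ ε : ℝ, 0 < ε → SymWC n m s 0 0 M (p ε) C) :
    ∃ (εs : ℕ → ℝ) (q : En n → En n → ℂ),
      (∀ l, 0 < εs l) ∧ Tendsto εs atTop (𝓝 0) ∧
      (∀ α β : Fin n → ℕ, ((mdeg α : ℕ) : ℕ∞) ≤ M - 1 → mdeg β ≤ m →
        (Continuous fun z : En n × En n => mixD α β q z.1 z.2) ∧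
        ∃ C : ℝ, (∀ z : En n × En n, ‖mixD α β q z.1 z.2‖ ≤ C) ∧
          ∀ z w : En n × En n,
            ‖mixD α β q z.1 z.2 - mixD α β q w.1 w.2‖ ≤ C * ‖z - w‖ ^ s) ∧
      (∀ α β : Fin n → ℕ, ((mdeg α : ℕ) : ℕ∞) ≤ M - 1 → mdeg β ≤ m →
        ∀ K : Set (En n × En n), IsCompact K →
          TendstoUniformlyOn (fun l (z : En n × En n) => mixD α β (p (εs l)) z.1 z.2)
            (fun z : En n × En n => mixD α β q z.1 z.2) atTop K) ∧
      SymClass n m s 0 0 (M - 1) q := by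
  classical
  obtain ⟨C, hC⟩ := hp
  obtain ⟨u, hu⟩ := TopologicalSpace.exists_dense_seq (En n × En n)
  set Valid : (Fin n → ℕ) → (Fin n → ℕ) → Prop :=
    fun α β => (((mdeg α : ℕ) : ℕ∞) ≤ M - 1 ∧ mdeg β ≤ m) with hValid
  have hε0pos : ∀ l : ℕ, 0 < (1 / (l + 1 : ℝ)) := fun l => by positivity
  set Φ : ℕ → (((Fin n → ℕ) × (Fin n → ℕ)) × ℕ) → ℂ := fun l j =>
    if Valid j.1.1 j.1.2 then mixD j.1.1 j.1.2 (p (1 / (l + 1 : ℝ))) (u j.2).1 (u j.2).2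
    else 0 with hΦdef
  set R : (((Fin n → ℕ) × (Fin n → ℕ)) × ℕ) → ℝ := fun j =>
    if Valid j.1.1 j.1.2 then C j.1.1 else 0 with hRdef
  have hΦmem : ∀ l, Φ l ∈ Set.pi Set.univ
      (fun j => Metric.closedBall (0:ℂ) (R j)) := by
    intro l
    rw [Set.mem_univ_pi]
    intro j
    simp only [hΦdef, hRdef]
    by_cases hv : Valid j.1.1 j.1.2
    · rw [if_pos hv, if_pos hv, Metric.mem_closedBall, dist_zero_right]
      have h1 : ((mdeg j.1.1 : ℕ) : ℕ∞) ≤ M := le_trans hv.1 tsub_le_self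
      exact symwc_bound (hC _ (hε0pos l)) h1 hv.2 _ _
    · rw [if_neg hv, if_neg hv]
      simp
  obtain ⟨Λ, -, φ, hφmono, hφtendsto⟩ :=
    (isCompact_univ_pi (fun j => isCompact_closedBall (0:ℂ) (R j))).tendsto_subseq hΦmem
  set εs : ℕ → ℝ := fun l => 1 / (φ l + 1 : ℝ) with hεsdef
  have hεspos : ∀ l, 0 < εs l := fun l => by positivity
  have hsym : ∀ l, SymWC n m s 0 0 M (p (εs l)) C := fun l => hC _ (hεspos l)
  have hεs0 : Tendsto εs atTop (𝓝 0) := by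
    apply squeeze_zero (fun l => (hεspos l).le) (g := fun l : ℕ => 1 / (l + 1 : ℝ))
    · intro l
      apply one_div_le_one_div_of_le (by positivity)
      have h1 : (l : ℝ) ≤ (φ l : ℝ) := Nat.cast_le.mpr hφmono.le_apply
      linarith
    · exact tendsto_one_div_add_atTop_nhds_zero_nat
  have hptD : ∀ (α β : Fin n → ℕ), Valid α β → ∀ k : ℕ,
      Tendsto (fun l => mixD α β (p (εs l)) (u k).1 (u k).2) atTop (𝓝 (Λ ((α, β), k))) := by
    intro α β hv k
    have h1 := (tendsto_pi_nhds.mp hφtendsto) ((α, β), k)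
    have h2 : (fun l => (Φ ∘ φ) l ((α, β), k))
        = fun l => mixD α β (p (εs l)) (u k).1 (u k).2 := by
      funext l
      simp only [Function.comp_apply, hΦdef]
      rw [if_pos hv]
    rw [h2] at h1
    exact h1
  have hMsub : ∀ a : Fin n → ℕ, ((mdeg a : ℕ) : ℕ∞) ≤ M - 1 → ((mdeg a : ℕ) : ℕ∞) ≤ M :=
    fun a ha => le_trans ha tsub_le_self
  have hMsub1 : ∀ a : Fin n → ℕ, ((mdeg a : ℕ) : ℕ∞) ≤ M - 1 →
      ((mdeg a + 1 : ℕ) : ℕ∞) ≤ M := fun a ha => enat_add_one_le_of_le_sub_one hM ha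
  set Kc : (Fin n → ℕ) → ℝ := fun α =>
    (((n : ℝ) * C α + 2 * C α + C α) + ((∑ i, C (α + Pi.single i 1)) + 2 * C α)) with hKcdef
  have hC0 : ∀ α : Fin n → ℕ, ((mdeg α : ℕ) : ℕ∞) ≤ M - 1 → 0 ≤ C α :=
    fun α hα => symwc_Cnonneg (hsym 0) (hMsub α hα)
  have hKc0 : ∀ α : Fin n → ℕ, ((mdeg α : ℕ) : ℕ∞) ≤ M - 1 → 0 ≤ Kc α := by
    intro α hα
    have h1 := hC0 α hα
    have h2 : 0 ≤ ∑ i, C (α + Pi.single i 1) := by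
      apply Finset.sum_nonneg
      intro i _
      apply symwc_Cnonneg (hsym 0)
      rw [mdeg_add, mdeg_single]
      exact hMsub1 α hα
    have h3 : (0:ℝ) ≤ (n : ℝ) * C α := by positivity
    simp only [hKcdef]
    linarith
  have hhol : ∀ (α β : Fin n → ℕ), Valid α β → ∀ (l : ℕ) (z w : En n × En n),
      dist (mixD α β (p (εs l)) z.1 z.2) (mixD α β (p (εs l)) w.1 w.2)
        ≤ Kc α * dist z w ^ s := by
    intro α β hv l z w
    rw [dist_eq_norm, dist_eq_norm]
    exact symwc_hol_joint (hsym l) hs0 hs1 (hMsub1 _ hv.1) hv.2 z w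
  have hptAll : ∀ (α β : Fin n → ℕ), Valid α β → ∀ z : En n × En n,
      ∃ c : ℂ, Tendsto (fun l => mixD α β (p (εs l)) z.1 z.2) atTop (𝓝 c) := by
    intro α β hv
    refine converges_everywhere (f := fun l (z : En n × En n) => mixD α β (p (εs l)) z.1 z.2)
      hs0 (hKc0 α hv.1) (fun l z w => hhol α β hv l z w) (D := Set.range u) hu ?_
    rintro d ⟨k, rfl⟩
    exact ⟨_, hptD α β hv k⟩
  set glim : (Fin n → ℕ) → (Fin n → ℕ) → (En n × En n) → ℂ :=
    fun α β z => limUnder atTop (fun l => mixD α β (p (εs l)) z.1 z.2) with hglimdef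
  have hconv : ∀ (α β : Fin n → ℕ), Valid α β → ∀ z : En n × En n,
      Tendsto (fun l => mixD α β (p (εs l)) z.1 z.2) atTop (𝓝 (glim α β z)) := by
    intro α β hv z
    obtain ⟨c, hc⟩ := hptAll α β hv z
    have hg : glim α β z = c := hc.limUnder_eq
    rw [hg]
    exact hc
  have hUC : ∀ (α β : Fin n → ℕ), Valid α β → ∀ K : Set (En n × En n), IsCompact K →
      TendstoUniformlyOn (fun l (z : En n × En n) => mixD α β (p (εs l)) z.1 z.2)
        (glim α β) atTop K :=
    fun α β hv K hK => tendstoUniformlyOn_of_equicont hs0 (hKc0 α hv.1)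
      (fun l z w => hhol α β hv l z w) (hconv α β hv) hK
  set q : En n → En n → ℂ := fun x ξ => glim 0 0 (x, ξ) with hqdef
  have hvalid0 : ∀ α : Fin n → ℕ, ((mdeg α : ℕ) : ℕ∞) ≤ M - 1 → Valid α 0 :=
    fun α hα => ⟨hα, by rw [mdeg_zero]; omega⟩
  have hrecon1 : ∀ x : En n,
      (∀ γ, ((mdeg γ : ℕ) : ℕ∞) ≤ M - 1 → pdMulti γ (q x) = fun ξ => glim γ 0 (x, ξ)) ∧
      (∀ γ, ((mdeg γ + 1 : ℕ) : ℕ∞) ≤ M - 1 → Differentiable ℝ (pdMulti γ (q x))) := by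
    intro x
    refine recon (M - 1) (fun l ξ => p (εs l) x ξ) (fun γ ξ => glim γ 0 (x, ξ)) ?_ ?_ ?_
    · intro l γ hγ
      exact (hsym l).1 γ (le_trans hγ tsub_le_self) x
    · intro l γ j hγ
      refine comm_pd ?_ γ le_rfl j
      intro δ hδ
      refine (hsym l).1 δ ?_ x
      refine le_trans ?_ (le_trans hγ tsub_le_self)
      exact Nat.cast_le.mpr (by omega)
    · intro γ hγ
      have h1 := tlu_fst (hUC γ 0 (hvalid0 γ hγ)) x
      simp only [mixD_zero] at h1
      exact h1
  have hphase1 : ∀ (α : Fin n → ℕ), ((mdeg α : ℕ) : ℕ∞) ≤ M - 1 → ∀ (x ξ : En n),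
      dXi α q x ξ = glim α 0 (x, ξ) :=
    fun α hα x ξ => congrFun ((hrecon1 x).1 α hα) ξ
  have hrecon2 : ∀ (α : Fin n → ℕ), ((mdeg α : ℕ) : ℕ∞) ≤ M - 1 → ∀ ξ : En n,
      (∀ β, ((mdeg β : ℕ) : ℕ∞) ≤ (m : ℕ∞) →
        pdMulti β (fun x => glim α 0 (x, ξ)) = fun x => glim α β (x, ξ)) ∧
      (∀ β, ((mdeg β + 1 : ℕ) : ℕ∞) ≤ (m : ℕ∞) →
        Differentiable ℝ (pdMulti β (fun x => glim α 0 (x, ξ)))) := by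
    intro α hα ξ
    refine recon (m : ℕ∞) (fun l x => dXi α (p (εs l)) x ξ) (fun β x => glim α β (x, ξ))
      ?_ ?_ ?_
    · intro l β hβ
      exact (hsym l).2.1 α β (hMsub α hα) (by exact_mod_cast hβ) ξ
    · intro l β j hβ
      refine comm_pd ?_ β le_rfl j
      intro δ hδ
      have hβm : mdeg β + 1 ≤ m := by exact_mod_cast hβ
      exact (hsym l).2.1 α δ (hMsub α hα) (by omega) ξ
    · intro β hβ
      have hβm : mdeg β ≤ m := by exact_mod_cast hβ
      exact tlu_snd (hUC α β ⟨hα, hβm⟩) ξ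
  have hident : ∀ (α β : Fin n → ℕ), Valid α β → ∀ (x ξ : En n),
      mixD α β q x ξ = glim α β (x, ξ) := by
    intro α β hv x ξ
    have hbase : (fun x' => dXi α q x' ξ) = fun x' => glim α 0 (x', ξ) :=
      funext fun x' => hphase1 α hv.1 x' ξ
    have h2 := (hrecon2 α hv.1 ξ).1 β (by exact_mod_cast hv.2)
    calc mixD α β q x ξ = pdMulti β (fun x' => dXi α q x' ξ) x := rfl
      _ = pdMulti β (fun x' => glim α 0 (x', ξ)) x := by rw [hbase]
      _ = glim α β (x, ξ) := congrFun h2 x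
  have hcontg : ∀ (α β : Fin n → ℕ), Valid α β → Continuous (glim α β) := by
    intro α β hv
    refine (tendstoLocallyUniformly_iff_forall_isCompact.mpr (hUC α β hv)).continuous ?_
    exact (Filter.Eventually.of_forall fun l => (hsym l).2.2.1 α β (hMsub α hv.1) hv.2).frequently
  have hboundg : ∀ (α β : Fin n → ℕ), Valid α β → ∀ z : En n × En n,
      ‖glim α β z‖ ≤ C α := by
    intro α β hv z
    refine le_of_tendsto (hconv α β hv z).norm (Filter.Eventually.of_forall fun l => ?_)
    exact symwc_bound (hsym l) (hMsub α hv.1) hv.2 z.1 z.2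
  have hholg : ∀ (α β : Fin n → ℕ), Valid α β → ∀ z w : En n × En n,
      ‖glim α β z - glim α β w‖ ≤ Kc α * ‖z - w‖ ^ s := by
    intro α β hv z w
    refine le_of_tendsto ((hconv α β hv z).sub (hconv α β hv w)).norm
      (Filter.Eventually.of_forall fun l => ?_)
    exact symwc_hol_joint (hsym l) hs0 hs1 (hMsub1 α hv.1) hv.2 z w
  have hholmg : ∀ (α β : Fin n → ℕ), Valid α β → mdeg β = m → ∀ (x y ξ : En n),
      ‖glim α β (x, ξ) - glim α β (y, ξ)‖ ≤ C α * ‖x - y‖ ^ s := by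
    intro α β hv hβm x y ξ
    refine le_of_tendsto ((hconv α β hv (x,ξ)).sub (hconv α β hv (y,ξ))).norm
      (Filter.Eventually.of_forall fun l => ?_)
    exact symwc_holm (hsym l) (hMsub α hv.1) hβm x y ξ
  refine ⟨εs, q, hεspos, hεs0, ?_, ?_, ?_⟩
  · intro α β hα hβ
    have hv : Valid α β := ⟨hα, hβ⟩
    have hfun : (fun z : En n × En n => mixD α β q z.1 z.2) = glim α β :=
      funext fun z => hident α β hv z.1 z.2
    constructor
    · rw [hfun]
      exact hcontg α β hv
    · refine ⟨C α + Kc α, ?_, ?_⟩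
      · intro z
        rw [show mixD α β q z.1 z.2 = glim α β z from hident α β hv z.1 z.2]
        have h1 := hboundg α β hv z
        have hk := hKc0 α hα
        linarith
      · intro z w
        rw [hident α β hv z.1 z.2, hident α β hv w.1 w.2]
        refine le_trans (hholg α β hv z w) ?_
        apply mul_le_mul_of_nonneg_right _ (Real.rpow_nonneg (norm_nonneg _) s)
        have h1 := hC0 α hα
        linarith
  · intro α β hα hβ K hK
    have hv : Valid α β := ⟨hα, hβ⟩
    have hfun : (fun z : En n × En n => mixD α β q z.1 z.2) = glim α β :=
      funext fun z => hident α β hv z.1 z.2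
    rw [hfun]
    exact hUC α β hv K hK
  · refine ⟨C, ?_, ?_, ?_, ?_⟩
    · intro α hα x
      exact (hrecon1 x).2 α hα
    · intro α β hα hβ ξ
      have h2 := (hrecon2 α hα ξ).2 β (by exact_mod_cast hβ)
      have hbase : (fun x' => glim α 0 (x', ξ)) = fun x' => dXi α q x' ξ :=
        funext fun x' => (hphase1 α hα x' ξ).symm
      rw [hbase] at h2
      exact h2
    · intro α β hα hβ
      have hv : Valid α β := ⟨hα, hβ⟩
      have hfun : (fun z : En n × En n => mixD α β q z.1 z.2) = glim α β :=
        funext fun z => hident α β hv z.1 z.2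
      rw [hfun]
      exact hcontg α β hv
    · intro α hα
      constructor
      · intro β hβ x ξ
        rw [jb_exp_zero, mul_one, hident α β ⟨hα, hβ⟩ x ξ]
        exact hboundg α β ⟨hα, hβ⟩ (x, ξ)
      · intro β hβ x y ξ
        rw [jb_exp_zero, mul_one, hident α β ⟨hα, by omega⟩ x ξ,
          hident α β ⟨hα, by omega⟩ y ξ]
        exact hholmg α β ⟨hα, by omega⟩ hβ x y ξ
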